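/- arXiv:2411.15935 — 12 statements merged into one kernel-verified Lean document; each statement's English description precedes it below -/
import Mathlib

section
/- Let T = Σ_{i=1}^r x^{(i)} where each x^{(i)} = x_1^{(i)} ⊗ ⋯ ⊗ x_d^{(i)} is a nonzero rank-one tensor in ℝ^{n_1} ⊗ ⋯ ⊗ ℝ^{n_d}. Then this decomposition is two-orthogonal if and only if for every j ∈ {1,…,r} and every subset I ⊆ {1,…,r}\{j}, the tensor x^{(j)} is a critical rank-one approximation of T − Σ_{i∈I} x^{(i)}. -/
/-- Frobenius/Euclidean inner product of real arrays indexed by a finite type. -/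
def fdot {ι : Type*} [Fintype ι] (u v : ι → ℝ) : ℝ := ∑ a, u a * v a

/-- The rank-one tensor `v₁ ⊗ ⋯ ⊗ v_d`, as an array. -/
def tensProd {d : ℕ} {n : Fin d → ℕ} (v : (k : Fin d) → Fin (n k) → ℝ) :
    ((k : Fin d) → Fin (n k)) → ℝ :=
  fun i => ∏ k, v k (i k)

/-- Replace the `k`-th factor of a tuple of vectors by `v`. -/
def updFactor {d : ℕ} {n : Fin d → ℕ} (x : (k : Fin d) → Fin (n k) → ℝ)
    (k : Fin d) (v : Fin (n k) → ℝ) : (k' : Fin d) → Fin (n k') → ℝ :=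
  @Function.update (Fin d) (fun k' => Fin (n k') → ℝ) _ x k v

lemma fdot_tensProd {d : ℕ} {n : Fin d → ℕ} (u v : (k : Fin d) → Fin (n k) → ℝ) :
    fdot (tensProd u) (tensProd v) = ∏ k, fdot (u k) (v k) := by
  unfold fdot tensProd
  rw [Finset.prod_univ_sum, Fintype.piFinset_univ]
  exact Finset.sum_congr rfl fun i _ => (Finset.prod_mul_distrib).symm

lemma fdot_sub_left {ι : Type*} [Fintype ι] (u v w : ι → ℝ) :
    fdot (u - v) w = fdot u w - fdot v w := by
  simp [fdot, sub_mul, Finset.sum_sub_distrib]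

lemma fdot_sum_left {ι : Type*} [Fintype ι] {α : Type*} (s : Finset α)
    (f : α → ι → ℝ) (w : ι → ℝ) :
    fdot (∑ i ∈ s, f i) w = ∑ i ∈ s, fdot (f i) w := by
  simp [fdot, Finset.sum_mul]
  exact Finset.sum_comm

lemma fdot_self_ne {ι : Type*} [Fintype ι] {w : ι → ℝ} (hw : w ≠ 0) :
    fdot w w ≠ 0 := by
  intro h
  apply hw
  funext a
  have := (Finset.sum_eq_zero_iff_of_nonneg (fun a _ => mul_self_nonneg (w a))).mp h a (Finset.mem_univ a)
  simpa using mul_self_eq_zero.mp this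

lemma factor_ne {d : ℕ} {n : Fin d → ℕ} {u : (k : Fin d) → Fin (n k) → ℝ}
    (hu : tensProd u ≠ 0) (k : Fin d) : u k ≠ 0 := by
  intro h
  apply hu
  funext i
  exact Finset.prod_eq_zero (Finset.mem_univ k) (by simp [h])

lemma updFactor_same {d : ℕ} {n : Fin d → ℕ} (x : (k : Fin d) → Fin (n k) → ℝ)
    (k : Fin d) (v : Fin (n k) → ℝ) : updFactor x k v k = v :=
  Function.update_self _ _ _

lemma updFactor_ne {d : ℕ} {n : Fin d → ℕ} (x : (k : Fin d) → Fin (n k) → ℝ)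
    {k k' : Fin d} (v : Fin (n k) → ℝ) (h : k' ≠ k) : updFactor x k v k' = x k' :=
  Function.update_of_ne h _ _

/-- A decomposition `T = Σᵢ x⁽ⁱ⁾` into nonzero rank-one tensors is two-orthogonal
if and only if each `x⁽ʲ⁾` is a critical rank-one approximation of
`T − Σ_{i ∈ I} x⁽ⁱ⁾` for every subset `I ⊆ {1,…,r} \ {j}`. -/
theorem stmt0 (d : ℕ) (hd : 2 ≤ d) (n : Fin d → ℕ) (hn : ∀ k, 2 ≤ n k)
    (r : ℕ) (hr : 1 ≤ r)
    (x : Fin r → (k : Fin d) → Fin (n k) → ℝ)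
    (hx : ∀ i, tensProd (x i) ≠ 0)
    (T : ((k : Fin d) → Fin (n k)) → ℝ)
    (hT : T = ∑ i, tensProd (x i)) :
    (∀ i j : Fin r, i ≠ j → ∃ k₁ k₂ : Fin d, k₁ ≠ k₂ ∧
        fdot (x i k₁) (x j k₁) = 0 ∧ fdot (x i k₂) (x j k₂) = 0)
    ↔
    (∀ j : Fin r, ∀ I : Finset (Fin r), j ∉ I →
      ∀ (k : Fin d) (v : Fin (n k) → ℝ),
        fdot ((T - ∑ i ∈ I, tensProd (x i)) - tensProd (x j))
          (tensProd (updFactor (x j) k v)) = 0) := by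
  constructor
  · intro H j I hjI k v
    rw [hT, fdot_sub_left, fdot_sub_left, fdot_sum_left, fdot_sum_left,
        ← Finset.sum_sdiff_eq_sub (Finset.subset_univ I)]
    have hj : j ∈ Finset.univ \ I := by simp [hjI]
    rw [← Finset.add_sum_erase _ _ hj]
    have hz : ∑ i ∈ (Finset.univ \ I).erase j,
        fdot (tensProd (x i)) (tensProd (updFactor (x j) k v)) = 0 := by
      apply Finset.sum_eq_zero
      intro i hi
      have hij : i ≠ j := (Finset.mem_erase.mp hi).1
      obtain ⟨k₁, k₂, hkk, h1, h2⟩ := H i j hij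
      rw [fdot_tensProd]
      have hex : ∃ k', k' ≠ k ∧ fdot (x i k') (x j k') = 0 := by
        by_cases h : k₁ = k
        · exact ⟨k₂, h ▸ hkk.symm, h2⟩
        · exact ⟨k₁, h, h1⟩
      obtain ⟨k', hk', hzz⟩ := hex
      apply Finset.prod_eq_zero (Finset.mem_univ k')
      rw [updFactor_ne _ _ hk']
      exact hzz
    rw [hz]; ring
  · intro H i j hij
    have hI : j ∉ Finset.univ \ ({i, j} : Finset (Fin r)) := by simp
    have key : ∀ k : Fin d, ∏ k' ∈ Finset.univ.erase k, fdot (x i k') (x j k') = 0 := by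
      intro k
      have h0 := H j (Finset.univ \ ({i, j} : Finset (Fin r))) hI k (x i k)
      have heq : (T - ∑ i' ∈ Finset.univ \ ({i, j} : Finset (Fin r)), tensProd (x i'))
          - tensProd (x j) = tensProd (x i) := by
        rw [hT]
        have h1 : (∑ i', tensProd (x i')) -
            ∑ i' ∈ Finset.univ \ ({i, j} : Finset (Fin r)), tensProd (x i')
            = ∑ i' ∈ Finset.univ \ (Finset.univ \ ({i, j} : Finset (Fin r))), tensProd (x i') :=
          (Finset.sum_sdiff_eq_sub Finset.sdiff_subset).symm
        rw [h1, Finset.sdiff_sdiff_eq_self (Finset.subset_univ _), Finset.sum_pair hij]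
        abel
      rw [heq, fdot_tensProd, ← Finset.prod_erase_mul _ _ (Finset.mem_univ k),
        updFactor_same] at h0
      rcases mul_eq_zero.mp h0 with h | h
      · rw [← h]
        refine Finset.prod_congr rfl fun k' hk' => ?_
        rw [updFactor_ne _ _ (Finset.mem_erase.mp hk').1]
      · exact absurd h (fdot_self_ne (factor_ne (hx i) k))
    have hd0 : 0 < d := by omega
    obtain ⟨k₁, hm1, hz1⟩ := Finset.prod_eq_zero_iff.mp (key ⟨0, hd0⟩)
    obtain ⟨k₂, hm2, hz2⟩ := Finset.prod_eq_zero_iff.mp (key k₁)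
    exact ⟨k₂, k₁, (Finset.mem_erase.mp hm2).1, hz2, hz1⟩
end

section
/- The maximal length of a two-orthogonal decomposition in ℝ^{n_1} ⊗ ⋯ ⊗ ℝ^{n_d} is N = min_{1 ≤ k ≤ d} ∏_{j ≠ k} n_j. That is: (a) every two-orthogonal decomposition T = Σ_{i=1}^r x^{(i)} with all summands nonzero has r ≤ N; and (b) there exists a tensor in ℝ^{n_1} ⊗ ⋯ ⊗ ℝ^{n_d} admitting a two-orthogonal decomposition with exactly N nonzero summands. -/
/-- Inner product of pure tensors factorizes as a product of mode inner products. -/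
lemma fdot_prod {J : Type*} [Fintype J] [DecidableEq J] {m : J → ℕ}
    (u v : (j : J) → Fin (m j) → ℝ) :
    fdot (fun a : (j : J) → Fin (m j) => ∏ j, u j (a j))
      (fun a => ∏ j, v j (a j)) = ∏ j, fdot (u j) (v j) := by
  unfold fdot
  rw [Finset.prod_univ_sum, Fintype.piFinset_univ]
  exact Finset.sum_congr rfl fun a _ => (Finset.prod_mul_distrib).symm

lemma fdot_pos {ι : Type*} [Fintype ι] {v : ι → ℝ} (h : v ≠ 0) : 0 < fdot v v := by
  obtain ⟨t, ht⟩ := Function.ne_iff.mp h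
  have ht' : v t ≠ 0 := ht
  have h1 : v t * v t ≤ ∑ a, v a * v a :=
    Finset.single_le_sum (f := fun a => v a * v a) (fun a _ => mul_self_nonneg _)
      (Finset.mem_univ t)
  have h2 : 0 < v t * v t := mul_self_pos.mpr ht'
  unfold fdot
  linarith

lemma fdot_sum_left_s1 {ι : Type*} [Fintype ι] {r : ℕ} (g : Fin r → ℝ) (w : Fin r → ι → ℝ)
    (v : ι → ℝ) : fdot (∑ i, g i • w i) v = ∑ i, g i * fdot (w i) v := by
  unfold fdot
  simp only [Finset.sum_apply, Pi.smul_apply, smul_eq_mul, Finset.mul_sum, Finset.sum_mul]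
  rw [Finset.sum_comm]
  exact Finset.sum_congr rfl fun i _ => Finset.sum_congr rfl fun a _ => by ring

lemma fdot_ind {m : ℕ} [NeZero m] (t t' : Fin m) (h : t ≠ t') :
    fdot (fun s => if s = t then (1 : ℝ) else 0) (fun s => if s = t' then 1 else 0) = 0 := by
  unfold fdot
  apply Finset.sum_eq_zero
  intro s _
  by_cases h1 : s = t
  · subst h1; simp [h]
  · simp [h1]

/-- The mode-`k` basis index of the `a`-th tensor in the construction for part (b). -/
def idxAux {d : ℕ} (n : Fin d → ℕ) (hn : ∀ k, 2 ≤ n k) (K : Fin d)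
    (a : (j : {j : Fin d // j ∈ Finset.univ.erase K}) → Fin (n j)) (k : Fin d) : Fin (n k) :=
  if h : k = K then ⟨(∑ j, ((a j : ℕ))) % n k, Nat.mod_lt _ (by have := hn k; omega)⟩
  else a ⟨k, by simp [Finset.mem_erase, h]⟩

/-- The maximal length of a two-orthogonal decomposition in
`ℝ^{n₁} ⊗ ⋯ ⊗ ℝ^{n_d}` is `N = min_k ∏_{j ≠ k} n_j`:
(a) every two-orthogonal decomposition with nonzero summands has at most `N` summands, and
(b) there is a two-orthogonal decomposition with exactly `N` nonzero summands. -/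
theorem stmt1 (d : ℕ) (hd : 2 ≤ d) (n : Fin d → ℕ) (hn : ∀ k, 2 ≤ n k)
    (N : ℕ)
    (hN : N = Finset.univ.inf' ⟨(⟨0, by omega⟩ : Fin d), Finset.mem_univ _⟩
        (fun k : Fin d => ∏ j ∈ Finset.univ.erase k, n j)) :
    ((∀ (r : ℕ) (x : Fin r → (k : Fin d) → Fin (n k) → ℝ),
      (∀ i, tensProd (x i) ≠ 0) →
      (∀ i j : Fin r, i ≠ j → ∃ k₁ k₂ : Fin d, k₁ ≠ k₂ ∧
        fdot (x i k₁) (x j k₁) = 0 ∧ fdot (x i k₂) (x j k₂) = 0) →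
      r ≤ N)
    ∧
    (∃ x : Fin N → (k : Fin d) → Fin (n k) → ℝ,
      (∀ i, tensProd (x i) ≠ 0) ∧
      (∀ i j : Fin N, i ≠ j → ∃ k₁ k₂ : Fin d, k₁ ≠ k₂ ∧
        fdot (x i k₁) (x j k₁) = 0 ∧ fdot (x i k₂) (x j k₂) = 0))) := by
  classical
  obtain ⟨K, -, hK⟩ := Finset.exists_max_image Finset.univ n
    ⟨(⟨0, by omega⟩ : Fin d), Finset.mem_univ _⟩
  -- `N` is the product of dimensions over all modes other than `K`
  have hNval : N = ∏ j ∈ Finset.univ.erase K, n j := by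
    rw [hN]
    apply le_antisymm
    · exact Finset.inf'_le _ (Finset.mem_univ K)
    · apply Finset.le_inf'
      intro k _
      have h1 : (∏ j ∈ Finset.univ.erase K, n j) * n K = ∏ j, n j :=
        Finset.prod_erase_mul _ _ (Finset.mem_univ K)
      have h2 : (∏ j ∈ Finset.univ.erase k, n j) * n k = ∏ j, n j :=
        Finset.prod_erase_mul _ _ (Finset.mem_univ k)
      have hk : 0 < n k := by have := hn k; omega
      have hmul : (∏ j ∈ Finset.univ.erase K, n j) * n k ≤
          (∏ j ∈ Finset.univ.erase k, n j) * n k := by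
        calc (∏ j ∈ Finset.univ.erase K, n j) * n k
            ≤ (∏ j ∈ Finset.univ.erase K, n j) * n K :=
              Nat.mul_le_mul_left _ (hK k (Finset.mem_univ k))
          _ = ∏ j, n j := h1
          _ = (∏ j ∈ Finset.univ.erase k, n j) * n k := h2.symm
      exact Nat.le_of_mul_le_mul_right hmul hk
  set E := Finset.univ.erase K with hE
  have hmemE : ∀ k : Fin d, k ≠ K → k ∈ E := fun k hk => by
    simp [hE, Finset.mem_erase, hk]
  have hcardPi : Fintype.card ((j : {j // j ∈ E}) → Fin (n j)) = N := by
    rw [Fintype.card_pi, hNval]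
    rw [← Finset.prod_coe_sort E n]
    exact Finset.prod_congr rfl fun j _ => Fintype.card_fin _
  constructor
  · -- Part (a): the upper bound
    intro r x hnz horth
    -- compress away mode `K`
    set y : Fin r → ((j : {j // j ∈ E}) → Fin (n j)) → ℝ :=
      fun i a => ∏ j : {j // j ∈ E}, x i j (a j) with hy
    have hvec : ∀ i k, x i k ≠ 0 := by
      intro i k h0
      obtain ⟨a, ha⟩ := Function.ne_iff.mp (hnz i)
      apply ha
      show (∏ k', x i k' (a k')) = (0 : ((k : Fin d) → Fin (n k)) → ℝ) a
      rw [Pi.zero_apply]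
      exact Finset.prod_eq_zero (Finset.mem_univ k) (by rw [h0]; rfl)
    have hself : ∀ i, 0 < fdot (y i) (y i) := by
      intro i
      rw [hy]
      rw [fdot_prod (fun j : {j // j ∈ E} => x i j) (fun j : {j // j ∈ E} => x i j)]
      exact Finset.prod_pos fun j _ => fdot_pos (hvec i j)
    have horthy : ∀ i j : Fin r, i ≠ j → fdot (y i) (y j) = 0 := by
      intro i j hij
      rw [hy]
      rw [fdot_prod (fun j' : {j // j ∈ E} => x i j') (fun j' : {j // j ∈ E} => x j j')]
      obtain ⟨k₁, k₂, hne, h1, h2⟩ := horth i j hij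
      have hex : ∃ k, k ≠ K ∧ fdot (x i k) (x j k) = 0 := by
        by_cases h : k₁ = K
        · exact ⟨k₂, by rw [← h]; exact (Ne.symm hne), h2⟩
        · exact ⟨k₁, h, h1⟩
      obtain ⟨k, hk, hzero⟩ := hex
      exact Finset.prod_eq_zero (Finset.mem_univ (⟨k, hmemE k hk⟩ : {j // j ∈ E})) hzero
    have hli : LinearIndependent ℝ y := by
      rw [Fintype.linearIndependent_iff]
      intro g hg i0
      have h1 : fdot (∑ i, g i • y i) (y i0) = 0 := by
        rw [hg]; unfold fdot; simp
      rw [fdot_sum_left_s1] at h1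
      rw [Finset.sum_eq_single i0 (fun b _ hb => by rw [horthy b i0 hb, mul_zero])
        (fun h => absurd (Finset.mem_univ i0) h)] at h1
      rcases mul_eq_zero.mp h1 with h | h
      · exact h
      · exact absurd h (hself i0).ne'
    have hcard := hli.fintype_card_le_finrank
    rwa [Fintype.card_fin, Module.finrank_pi, hcardPi] at hcard
  · -- Part (b): the construction
    let e : Fin N ≃ ((j : {j // j ∈ E}) → Fin (n j)) :=
      (Fintype.equivFinOfCardEq hcardPi).symm
    refine ⟨fun i k t => if t = idxAux n hn K (e i) k then 1 else 0, ?_, ?_⟩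
    · intro i h0
      have := congrFun h0 (fun k => idxAux n hn K (e i) k)
      simp [tensProd] at this
    · intro i j hij
      have hab : e i ≠ e j := fun h => hij (e.injective h)
      obtain ⟨j₀, hj₀⟩ := Function.ne_iff.mp hab
      have hinst : ∀ k : Fin d, NeZero (n k) := fun k => ⟨by have := hn k; omega⟩
      -- helper: produce the fdot equation from index inequality
      have key : ∀ k : Fin d, idxAux n hn K (e i) k ≠ idxAux n hn K (e j) k →
          fdot (fun t => if t = idxAux n hn K (e i) k then (1:ℝ) else 0)
            (fun t => if t = idxAux n hn K (e j) k then 1 else 0) = 0 := by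
        intro k hk
        have := hinst k
        exact fdot_ind _ _ hk
      have hval : ∀ (a : (j : {j // j ∈ E}) → Fin (n j)) (jj : {j // j ∈ E}),
          idxAux n hn K a jj.1 = a jj := by
        intro a jj
        have hne : jj.1 ≠ K := (Finset.mem_erase.mp jj.2).1
        rw [idxAux, dif_neg hne]
      by_cases hcase : ∀ jj : {j // j ∈ E}, jj ≠ j₀ → e i jj = e j jj
      · -- differ only at j₀ : use modes j₀ and K
        have hj₀K : j₀.1 ≠ K := (Finset.mem_erase.mp j₀.2).1
        refine ⟨j₀.1, K, hj₀K, key _ ?_, key _ ?_⟩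
        · rw [hval, hval]; exact hj₀
        · -- mode K indices differ
          rw [idxAux, dif_pos rfl, idxAux, dif_pos rfl]
          intro hcon
          have hvk : ((∑ jj, ((e i jj : ℕ))) % n K) = ((∑ jj, ((e j jj : ℕ))) % n K) :=
            congrArg Fin.val hcon
          have hsum1 : (∑ jj, ((e i jj : ℕ))) =
              (e i j₀ : ℕ) + ∑ jj ∈ Finset.univ.erase j₀, ((e i jj : ℕ)) :=
            (Finset.add_sum_erase _ _ (Finset.mem_univ j₀)).symm
          have hsum2 : (∑ jj, ((e j jj : ℕ))) =
              (e j j₀ : ℕ) + ∑ jj ∈ Finset.univ.erase j₀, ((e j jj : ℕ)) :=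
            (Finset.add_sum_erase _ _ (Finset.mem_univ j₀)).symm
          have htail : (∑ jj ∈ Finset.univ.erase j₀, ((e i jj : ℕ))) =
              ∑ jj ∈ Finset.univ.erase j₀, ((e j jj : ℕ)) :=
            Finset.sum_congr rfl fun jj hjj =>
              congrArg Fin.val (hcase jj (Finset.mem_erase.mp hjj).1)
          rw [hsum1, hsum2, htail] at hvk
          have hmeq : (e i j₀ : ℕ) ≡ (e j j₀ : ℕ) [MOD n K] :=
            Nat.ModEq.add_right_cancel' _ hvk
          have hlt1 : (e i j₀ : ℕ) < n K := lt_of_lt_of_le (e i j₀).isLt (hK _ (Finset.mem_univ _))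
          have hlt2 : (e j j₀ : ℕ) < n K := lt_of_lt_of_le (e j j₀).isLt (hK _ (Finset.mem_univ _))
          have : (e i j₀ : ℕ) = (e j j₀ : ℕ) := by
            have := hmeq
            unfold Nat.ModEq at this
            rwa [Nat.mod_eq_of_lt hlt1, Nat.mod_eq_of_lt hlt2] at this
          exact hj₀ (Fin.ext this)
      · -- differ at two modes in E
        push_neg at hcase
        obtain ⟨j₁, hj₁ne, hj₁⟩ := hcase
        refine ⟨j₀.1, j₁.1, fun h => hj₁ne (Subtype.ext h.symm), key _ ?_, key _ ?_⟩
        · rw [hval, hval]; exact hj₀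
        · rw [hval, hval]; exact hj₁
end

section
/- Fix a tensor T ∈ ℝ^{n_1} ⊗ ⋯ ⊗ ℝ^{n_d}. Let (x^{(j)})_{j≥1} be a sequence of rank-one tensors such that for each j, x^{(j)} is a best rank-one approximation of T − Σ_{i<j} x^{(i)}, i.e. x^{(j)} minimizes ‖(T − Σ_{i<j} x^{(i)}) − y‖ over all rank-one tensors y. Then the partial sums Σ_{i=1}^n x^{(i)} converge to T as n → ∞; equivalently, ‖T − Σ_{i=1}^n x^{(i)}‖ → 0. -/
/-- Frobenius norm. -/
noncomputable def fnorm {ι : Type*} [Fintype ι] (u : ι → ℝ) : ℝ := Real.sqrt (fdot u u)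

lemma fdot_self_nonneg {ι : Type*} [Fintype ι] (u : ι → ℝ) : 0 ≤ fdot u u :=
  Finset.sum_nonneg fun a _ => mul_self_nonneg _

lemma fdot_sub_self {ι : Type*} [Fintype ι] (u w : ι → ℝ) :
    fdot (u - w) (u - w) = fdot u u - 2 * fdot u w + fdot w w := by
  simp only [fdot, Pi.sub_apply, Finset.mul_sum]
  rw [← Finset.sum_sub_distrib, ← Finset.sum_add_distrib]
  exact Finset.sum_congr rfl fun a _ => by ring

lemma prod_ite_eq_one_zero {α : Type*} [Fintype α] {β : α → Type*} [∀ a, DecidableEq (β a)]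
    (f g : (a : α) → β a) :
    ∏ a, (if f a = g a then (1 : ℝ) else 0) = if f = g then 1 else 0 := by
  classical
  by_cases h : f = g
  · simp [h]
  · rw [if_neg h]
    obtain ⟨a, ha⟩ := Function.ne_iff.mp h
    exact Finset.prod_eq_zero (Finset.mem_univ a) (if_neg ha)

lemma exists_good_rankone {d : ℕ} (n : Fin d → ℕ) (hn : ∀ k, 1 ≤ n k) (k0 : Fin d)
    (R : ((k : Fin d) → Fin (n k)) → ℝ) :
    ∃ v : (k : Fin d) → Fin (n k) → ℝ,
      fdot (R - tensProd v) (R - tensProd v)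
        ≤ (1 - 1 / (Fintype.card ((k : { k : Fin d // k ≠ k0 }) → Fin (n k.1)) : ℝ))
            * fdot R R := by
  classical
  haveI hWne : Nonempty ((k : { k : Fin d // k ≠ k0 }) → Fin (n k.1)) :=
    ⟨fun k => ⟨0, hn k.1⟩⟩
  set e := Equiv.piSplitAt k0 (fun k => Fin (n k)) with he
  set N : ℝ := (Fintype.card ((k : { k : Fin d // k ≠ k0 }) → Fin (n k.1)) : ℝ) with hNdef
  have hN0 : (0 : ℝ) < N := by
    rw [hNdef]; exact_mod_cast Fintype.card_pos
  set S : ((k : { k : Fin d // k ≠ k0 }) → Fin (n k.1)) → ℝ :=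
    fun w => ∑ j, R (e.symm (j, w)) * R (e.symm (j, w)) with hS
  set V : ((k : { k : Fin d // k ≠ k0 }) → Fin (n k.1)) → (k : Fin d) → Fin (n k) → ℝ :=
    fun w k j => if h : k = k0 then R (e.symm (h ▸ j, w)) else if w ⟨k, h⟩ = j then 1 else 0
    with hV
  -- the pointwise values of the candidate rank-one tensor
  have hVval : ∀ (w : ((k : { k : Fin d // k ≠ k0 }) → Fin (n k.1))) (j : Fin (n k0)) u,
      tensProd (V w) (e.symm (j, u)) = if u = w then R (e.symm (j, w)) else 0 := by
    intro w j u
    have hc0 : (e.symm (j, u)) k0 = j := by simp [he]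
    have hc : ∀ (k : Fin d) (h : k ≠ k0), (e.symm (j, u)) k = u ⟨k, h⟩ := by
      intro k h; simp [he, h]
    rw [tensProd, Fintype.prod_eq_mul_prod_compl k0]
    have h1 : V w k0 ((e.symm (j, u)) k0) = R (e.symm (j, w)) := by
      rw [hc0]; simp [hV]
    have h2 : ∏ k ∈ ({k0}ᶜ : Finset (Fin d)), V w k ((e.symm (j, u)) k)
        = if w = u then 1 else 0 := by
      rw [Finset.prod_subtype (p := fun k => k ≠ k0) ({k0}ᶜ : Finset (Fin d))
        (by intro x; simp) (fun k => V w k ((e.symm (j, u)) k))]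
      have : ∀ k : { k : Fin d // k ≠ k0 },
          V w k.1 ((e.symm (j, u)) k.1) = if w k = u k then 1 else 0 := by
        intro k
        rw [hc k.1 k.2]
        simp [hV, k.2]
      rw [Finset.prod_congr rfl fun k _ => this k]
      exact prod_ite_eq_one_zero w u
    rw [h1, h2]
    by_cases h : u = w
    · simp [h]
    · simp [h, Ne.symm h]
  have hRy : ∀ w, fdot R (tensProd (V w)) = S w := by
    intro w
    rw [fdot, ← Equiv.sum_comp e.symm (fun i => R i * tensProd (V w) i),
      Fintype.sum_prod_type]
    refine Finset.sum_congr rfl fun j _ => ?_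
    simp only [hVval w j, mul_ite, mul_zero]
    rw [Finset.sum_ite_eq' Finset.univ w (fun u => R (e.symm (j, u)) * R (e.symm (j, w)))]
    simp
  have hyy : ∀ w, fdot (tensProd (V w)) (tensProd (V w)) = S w := by
    intro w
    rw [fdot, ← Equiv.sum_comp e.symm (fun i => tensProd (V w) i * tensProd (V w) i),
      Fintype.sum_prod_type]
    refine Finset.sum_congr rfl fun j _ => ?_
    have : ∀ u, tensProd (V w) (e.symm (j, u)) * tensProd (V w) (e.symm (j, u))
        = if u = w then R (e.symm (j, w)) * R (e.symm (j, w)) else 0 := by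
      intro u
      rw [hVval w j u]
      by_cases h : u = w <;> simp [h]
    rw [Finset.sum_congr rfl fun u _ => this u,
      Finset.sum_ite_eq' Finset.univ w (fun _ => R (e.symm (j, w)) * R (e.symm (j, w)))]
    simp
  have hsum : ∑ w, S w = fdot R R := by
    rw [fdot, ← Equiv.sum_comp e.symm (fun i => R i * R i), Fintype.sum_prod_type]
    simp only [hS]
    rw [Finset.sum_comm]
  -- average argument
  have havg : ∑ _w : ((k : { k : Fin d // k ≠ k0 }) → Fin (n k.1)), (fdot R R / N) ≤ ∑ w, S w := by
    rw [hsum, Finset.sum_const, Finset.card_univ, nsmul_eq_mul, ← hNdef,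
      mul_div_cancel₀ _ (ne_of_gt hN0)]
  obtain ⟨w, -, hw⟩ := Finset.exists_le_of_sum_le Finset.univ_nonempty havg
  refine ⟨V w, ?_⟩
  rw [fdot_sub_self, hRy w, hyy w]
  have hexp : (1 - 1 / N) * fdot R R = fdot R R - fdot R R / N := by ring
  rw [hexp]
  linarith

/-- If each `x⁽ʲ⁾` is a best rank-one approximation of `T − Σ_{i<j} x⁽ⁱ⁾`, then the
partial sums `Σ_{i≤m} x⁽ⁱ⁾` converge to `T`, i.e. `‖T − Σ_{i≤m} x⁽ⁱ⁾‖ → 0`. -/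
theorem stmt4 (d : ℕ) (hd : 2 ≤ d) (n : Fin d → ℕ) (hn : ∀ k, 2 ≤ n k)
    (T : ((k : Fin d) → Fin (n k)) → ℝ)
    (x : ℕ → ((k : Fin d) → Fin (n k)) → ℝ)
    (hrank : ∀ j, ∃ v : (k : Fin d) → Fin (n k) → ℝ, x j = tensProd v)
    (hbest : ∀ (j : ℕ) (v : (k : Fin d) → Fin (n k) → ℝ),
      fnorm ((T - ∑ i ∈ Finset.range j, x i) - x j)
        ≤ fnorm ((T - ∑ i ∈ Finset.range j, x i) - tensProd v)) :
    Filter.Tendsto (fun m : ℕ => fnorm (T - ∑ i ∈ Finset.range m, x i))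
      Filter.atTop (nhds 0) := by
  classical
  have hd0 : 0 < d := by omega
  set k0 : Fin d := ⟨0, hd0⟩ with hk0
  haveI : Nonempty ((k : { k : Fin d // k ≠ k0 }) → Fin (n k.1)) :=
    ⟨fun k => ⟨0, by have := hn k.1; omega⟩⟩
  set N : ℝ := (Fintype.card ((k : { k : Fin d // k ≠ k0 }) → Fin (n k.1)) : ℝ) with hNdef
  have hN1 : (1 : ℝ) ≤ N := by
    rw [hNdef]; exact_mod_cast Fintype.card_pos
  set ρ : ℝ := 1 - 1 / N with hρdef
  have hρ0 : 0 ≤ ρ := by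
    have h1 : 1 / N ≤ 1 := by
      rw [div_le_one (by linarith)]; linarith
    simp only [hρdef]; linarith
  have hρ1 : ρ < 1 := by
    have : 0 < 1 / N := by positivity
    simp only [hρdef]; linarith
  set g : ℕ → ℝ := fun m =>
    fdot (T - ∑ i ∈ Finset.range m, x i) (T - ∑ i ∈ Finset.range m, x i) with hgdef
  have hstep : ∀ m, g (m + 1) ≤ ρ * g m := by
    intro m
    obtain ⟨v, hv⟩ := exists_good_rankone n (fun k => le_trans one_le_two (hn k)) k0
      (T - ∑ i ∈ Finset.range m, x i)
    have h1 := hbest m v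
    have h2 : fdot ((T - ∑ i ∈ Finset.range m, x i) - x m)
          ((T - ∑ i ∈ Finset.range m, x i) - x m)
        ≤ fdot ((T - ∑ i ∈ Finset.range m, x i) - tensProd v)
          ((T - ∑ i ∈ Finset.range m, x i) - tensProd v) :=
      (Real.sqrt_le_sqrt_iff (fdot_self_nonneg _)).mp h1
    have h3 : g (m + 1) = fdot ((T - ∑ i ∈ Finset.range m, x i) - x m)
        ((T - ∑ i ∈ Finset.range m, x i) - x m) := by
      simp only [hgdef, Finset.sum_range_succ, sub_add_eq_sub_sub]
    rw [h3]
    exact le_trans (le_trans h2 hv) (le_of_eq rfl)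
  have hpow : ∀ m, g m ≤ ρ ^ m * g 0 := by
    intro m
    induction m with
    | zero => simp
    | succ m ih =>
      calc g (m + 1) ≤ ρ * g m := hstep m
        _ ≤ ρ * (ρ ^ m * g 0) := mul_le_mul_of_nonneg_left ih hρ0
        _ = ρ ^ (m + 1) * g 0 := by ring
  have hlim : Filter.Tendsto (fun m : ℕ => ρ ^ m * g 0) Filter.atTop (nhds 0) := by
    simpa using
      (tendsto_pow_atTop_nhds_zero_of_lt_one hρ0 hρ1).mul_const (g 0)
  have hg0 : Filter.Tendsto g Filter.atTop (nhds 0) :=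
    squeeze_zero (fun m => fdot_self_nonneg _) hpow hlim
  have := (Real.continuous_sqrt.tendsto 0).comp hg0
  simp only [Real.sqrt_zero] at this
  exact this
end

section
/- Let d ≥ 2, let e_1,…,e_n be the standard basis of ℝ^n, let 1 ≤ r ≤ n, and let λ_1,…,λ_r be nonzero real numbers. Then the odeco tensor T = Σ_{i=1}^r λ_i e_i^{⊗d} ∈ (ℝ^n)^{⊗d} has border rank exactly r: T has rank at most r, and T does not lie in the Euclidean closure of the set of tensors of rank at most r − 1. In particular, T has rank exactly r. -/
/-- The rank-one tensor `v₁ ⊗ ⋯ ⊗ v_d` in `(ℝ^n)^{⊗d}`, as an array. -/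
def tensProdC {d n : ℕ} (v : Fin d → Fin n → ℝ) : (Fin d → Fin n) → ℝ :=
  fun i => ∏ k, v k (i k)

/-- `T` has (tensor) rank at most `r`. -/
def rankLE {d n : ℕ} (T : (Fin d → Fin n) → ℝ) (r : ℕ) : Prop :=
  ∃ v : Fin r → Fin d → Fin n → ℝ, T = ∑ i, tensProdC (v i)

/-- A sum of `m < r` rank-one `r × r` matrices has zero determinant. -/
lemma det_sum_rank_one_eq_zero {r m : ℕ} (hm : m < r)
    (A B : Fin m → Fin r → ℝ) :
    (Matrix.of fun i j => ∑ t, A t i * B t j).det = 0 := by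
  by_contra h
  have hM : (Matrix.of fun i j => ∑ t, A t i * B t j)
      = (Matrix.of fun i t => A t i) * (Matrix.of fun t j => B t j) := by
    ext i j
    simp [Matrix.mul_apply]
  have hUnit : IsUnit (Matrix.of fun i j => ∑ t, A t i * B t j) :=
    (Matrix.isUnit_iff_isUnit_det _).2 (isUnit_iff_ne_zero.2 h)
  have h1 : (Matrix.of fun i j => ∑ t, A t i * B t j).rank = r := by
    rw [Matrix.rank_of_isUnit _ hUnit, Fintype.card_fin]
  have h2 : (Matrix.of fun i j => ∑ t, A t i * B t j).rank ≤ m := by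
    rw [hM]
    exact (Matrix.rank_mul_le_right _ _).trans
      ((Matrix.rank_le_card_height _).trans (by simp))
  omega

/-- The odeco tensor `T = Σ_{i=1}^r λᵢ eᵢ^{⊗d}` with all `λᵢ ≠ 0` and `r ≤ n` has
border rank exactly `r`: it has rank at most `r` and does not lie in the closure of
the set of tensors of rank at most `r − 1`. In particular its rank is exactly `r`. -/
theorem stmt7 (d n : ℕ) (hd : 2 ≤ d) (hn : 2 ≤ n)
    (r : ℕ) (hr : 1 ≤ r) (hrn : r ≤ n)
    (lam : Fin r → ℝ) (hlam : ∀ i, lam i ≠ 0)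
    (T : (Fin d → Fin n) → ℝ)
    (hT : T = ∑ i : Fin r,
      lam i • tensProdC (fun _ : Fin d => Pi.single (Fin.castLE hrn i) (1 : ℝ))) :
    rankLE T r ∧
    T ∉ closure {S : (Fin d → Fin n) → ℝ | rankLE S (r - 1)} ∧
    ¬ rankLE T (r - 1) := by
  haveI : NeZero d := ⟨by omega⟩
  -- Part 1: rank ≤ r
  have part1 : rankLE T r := by
    refine ⟨fun i k x => (if k = (0 : Fin d) then lam i else 1) *
      Pi.single (M := fun _ => ℝ) (Fin.castLE hrn i) (1 : ℝ) x, ?_⟩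
    rw [hT]
    refine Finset.sum_congr rfl fun i _ => ?_
    funext x
    simp only [Pi.smul_apply, tensProdC, smul_eq_mul]
    rw [Finset.prod_mul_distrib]
    congr 1
    simp [Finset.prod_ite_eq']
  -- the flattening index map
  set idx : Fin r → Fin r → (Fin d → Fin n) := fun i j k =>
    if k = (0 : Fin d) then Fin.castLE hrn i else Fin.castLE hrn j with hidx
  -- the flattening map is continuous
  have hcont : Continuous fun S : (Fin d → Fin n) → ℝ =>
      (Matrix.of fun i j => S (idx i j)).det := by
    apply Continuous.matrix_det
    exact continuous_pi fun i => continuous_pi fun j => continuous_apply _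
  -- flattening of a rank ≤ r-1 tensor has det zero
  have hC : {S : (Fin d → Fin n) → ℝ | rankLE S (r - 1)} ⊆
      {S | (Matrix.of fun i j => S (idx i j)).det = 0} := by
    rintro S ⟨v, rfl⟩
    have heq : (Matrix.of fun i j => (∑ t, tensProdC (v t)) (idx i j))
        = Matrix.of fun i j => ∑ t, (fun t i => v t 0 (Fin.castLE hrn i)) t i *
            (fun t j => ∏ k ∈ Finset.univ.erase (0 : Fin d),
              v t k (Fin.castLE hrn j)) t j := by
      ext i j
      simp only [Matrix.of_apply, Finset.sum_apply]
      refine Finset.sum_congr rfl fun t _ => ?_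
      unfold tensProdC
      rw [← Finset.mul_prod_erase Finset.univ _ (Finset.mem_univ (0 : Fin d))]
      simp only [hidx, if_pos rfl]
      congr 1
      refine Finset.prod_congr rfl fun k hk => ?_
      rw [if_neg (Finset.ne_of_mem_erase hk)]
    show (Matrix.of fun i j => (∑ t, tensProdC (v t)) (idx i j)).det = 0
    rw [heq]
    exact det_sum_rank_one_eq_zero (by omega) _ _
  -- flattening of T is diagonal with nonzero det
  have hTdet : (Matrix.of fun i j => T (idx i j)).det ≠ 0 := by
    have hTd : (Matrix.of fun i j => T (idx i j)) = Matrix.diagonal lam := by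
      ext i j
      simp only [Matrix.of_apply, hT, Finset.sum_apply, Pi.smul_apply, smul_eq_mul]
      unfold tensProdC
      have hprod : ∀ t : Fin r,
          (∏ k, Pi.single (M := fun _ => ℝ) (Fin.castLE hrn t) 1 (idx i j k))
          = (if i = t then 1 else 0) * (if j = t then 1 else 0) := by
        intro t
        rw [← Finset.mul_prod_erase Finset.univ _ (Finset.mem_univ (0 : Fin d))]
        have h0 : Pi.single (M := fun _ => ℝ) (Fin.castLE hrn t) 1 (idx i j 0)
            = if i = t then 1 else 0 := by
          simp only [hidx, if_pos rfl, Pi.single_apply]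
          simp [Fin.castLE_inj, eq_comm]
        have h1 : (∏ k ∈ Finset.univ.erase (0 : Fin d),
            Pi.single (M := fun _ => ℝ) (Fin.castLE hrn t) 1 (idx i j k))
            = if j = t then 1 else 0 := by
          have : ∀ k ∈ Finset.univ.erase (0 : Fin d),
              Pi.single (M := fun _ => ℝ) (Fin.castLE hrn t) 1 (idx i j k)
              = if j = t then 1 else 0 := by
            intro k hk
            simp only [hidx, if_neg (Finset.ne_of_mem_erase hk), Pi.single_apply]
            simp [Fin.castLE_inj, eq_comm]
          rw [Finset.prod_congr rfl this, Finset.prod_const]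
          have hcard : (Finset.univ.erase (0 : Fin d)).card = d - 1 := by
            rw [Finset.card_erase_of_mem (Finset.mem_univ _), Finset.card_univ,
              Fintype.card_fin]
          rw [hcard]
          by_cases hjt : j = t <;> simp [hjt, zero_pow (by omega : d - 1 ≠ 0)]
        rw [h0, h1]
      rw [Finset.sum_congr rfl (fun t _ => by rw [hprod t])]
      by_cases hij : i = j
      · subst hij
        simp [Matrix.diagonal_apply_eq, Finset.sum_ite_eq', mul_ite]
      · rw [Matrix.diagonal_apply_ne _ hij]
        apply Finset.sum_eq_zero
        intro t _
        by_cases hit : i = t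
        · subst hit; simp [Ne.symm hij, hij]
        · simp [hit]
    rw [hTd, Matrix.det_diagonal]
    exact Finset.prod_ne_zero_iff.2 fun t _ => hlam t
  -- Part 2: not in closure
  have part2 : T ∉ closure {S : (Fin d → Fin n) → ℝ | rankLE S (r - 1)} := by
    intro hmem
    have hclosed : IsClosed {S : (Fin d → Fin n) → ℝ |
        (Matrix.of fun i j => S (idx i j)).det = 0} :=
      isClosed_singleton.preimage hcont
    have := (closure_minimal hC hclosed) hmem
    exact hTdet this
  exact ⟨part1, part2, fun h => part2 (subset_closure h)⟩
end

section
/- Let e_1, e_2, e_3 be the standard basis of ℝ³ and let T = e_1 ⊗ e_1 ⊗ e_1 + e_1 ⊗ e_2 ⊗ e_2 + e_1 ⊗ e_3 ⊗ e_3 + e_2 ⊗ e_1 ⊗ e_2 + e_3 ⊗ e_1 ⊗ e_3 ∈ (ℝ³)^{⊗3}. Then T has rank exactly 5: T is a sum of 5 rank-one tensors and is not a sum of 4 rank-one tensors. -/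
/-- The tensor `T = e₁⊗e₁⊗e₁ + e₁⊗e₂⊗e₂ + e₁⊗e₃⊗e₃ + e₂⊗e₁⊗e₂ + e₃⊗e₁⊗e₃
∈ (ℝ³)^{⊗3}` has rank exactly 5. -/
theorem stmt10 (e : Fin 3 → Fin 3 → ℝ) (he : ∀ a, e a = Pi.single a 1)
    (T : (Fin 3 → Fin 3) → ℝ)
    (hT : T = tensProdC ![e 0, e 0, e 0] + tensProdC ![e 0, e 1, e 1]
        + tensProdC ![e 0, e 2, e 2] + tensProdC ![e 1, e 0, e 1]
        + tensProdC ![e 2, e 0, e 2]) :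
    rankLE T 5 ∧ ¬ rankLE T 4 := by
  constructor
  · refine ⟨![![e 0, e 0, e 0], ![e 0, e 1, e 1], ![e 0, e 2, e 2],
      ![e 1, e 0, e 1], ![e 2, e 0, e 2]], ?_⟩
    rw [hT, Fin.sum_univ_five]
    simp
  · rintro ⟨v, hv⟩
    -- entries of T from the putative rank-4 decomposition
    have hS : ∀ t p q : Fin 3,
        (∑ i : Fin 4, v i 0 t * (v i 1 p * v i 2 q)) = T ![t, p, q] := by
      intro t p q
      rw [hv]
      rw [Finset.sum_apply]
      refine Finset.sum_congr rfl fun i _ => ?_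
      simp [tensProdC, Fin.prod_univ_three, mul_assoc]
    -- entries of T from hT
    have hTv : ∀ t p q : Fin 3, T ![t, p, q] =
        (if t = 0 ∧ p = q then (1:ℝ) else 0)
          + (if t = 1 ∧ p = 0 ∧ q = 1 then 1 else 0)
          + (if t = 2 ∧ p = 0 ∧ q = 2 then 1 else 0) := by
      intro t p q
      rw [hT]
      simp only [Pi.add_apply, tensProdC, Fin.prod_univ_three, he]
      fin_cases t <;> fin_cases p <;> fin_cases q <;>
        norm_num [Pi.single_apply, Matrix.cons_val_zero, Matrix.cons_val_one, Matrix.cons_val_two,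
          Matrix.head_cons, Matrix.vecHead, Matrix.vecTail, Fin.ext_iff, -Fin.val_eq_zero_iff]
    have hE0 : ∀ p q : Fin 3, (∑ i : Fin 4, v i 0 0 * (v i 1 p * v i 2 q))
        = if p = q then (1:ℝ) else 0 := by
      intro p q; rw [hS, hTv]; norm_num [Fin.ext_iff, -Fin.val_eq_zero_iff]
    have hE1 : ∀ p q : Fin 3, (∑ i : Fin 4, v i 0 1 * (v i 1 p * v i 2 q))
        = if p = 0 ∧ q = 1 then (1:ℝ) else 0 := by
      intro p q; rw [hS, hTv]; norm_num [Fin.ext_iff, -Fin.val_eq_zero_iff]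
    have hE2 : ∀ p q : Fin 3, (∑ i : Fin 4, v i 0 2 * (v i 1 p * v i 2 q))
        = if p = 0 ∧ q = 2 then (1:ℝ) else 0 := by
      intro p q; rw [hS, hTv]; norm_num [Fin.ext_iff, -Fin.val_eq_zero_iff]
    -- first substitution: find i₀ with v i₀ 0 2 ≠ 0
    have h2 : (∑ i : Fin 4, v i 0 2 * (v i 1 0 * v i 2 2)) ≠ 0 := by
      rw [hE2]; norm_num [Fin.ext_iff]
    obtain ⟨i₀, -, hi₀⟩ := Finset.exists_ne_zero_of_sum_ne_zero h2
    have hA2 : v i₀ 0 2 ≠ 0 := left_ne_zero_of_mul hi₀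
    set l0 : ℝ := -(v i₀ 0 0) / v i₀ 0 2 with hl0
    set l1 : ℝ := -(v i₀ 0 1) / v i₀ 0 2 with hl1
    set w : Fin 4 → ℝ := fun i => v i 0 0 + l0 * v i 0 2 with hw
    set u : Fin 4 → ℝ := fun i => v i 0 1 + l1 * v i 0 2 with hu
    have hwi₀ : w i₀ = 0 := by rw [hw]; simp only [hl0]; field_simp; ring
    have hui₀ : u i₀ = 0 := by rw [hu]; simp only [hl1]; field_simp; ring
    have hW : ∀ p q : Fin 3, (∑ i : Fin 4, w i * (v i 1 p * v i 2 q))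
        = (if p = q then (1:ℝ) else 0) + l0 * (if p = 0 ∧ q = 2 then 1 else 0) := by
      intro p q
      have : ∀ i : Fin 4, w i * (v i 1 p * v i 2 q)
          = v i 0 0 * (v i 1 p * v i 2 q) + l0 * (v i 0 2 * (v i 1 p * v i 2 q)) := by
        intro i; rw [hw]; ring
      rw [Finset.sum_congr rfl fun i _ => this i, Finset.sum_add_distrib,
        ← Finset.mul_sum, hE0, hE2]
    have hU : ∀ p q : Fin 3, (∑ i : Fin 4, u i * (v i 1 p * v i 2 q))
        = (if p = 0 ∧ q = 1 then (1:ℝ) else 0) + l1 * (if p = 0 ∧ q = 2 then 1 else 0) := by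
      intro p q
      have : ∀ i : Fin 4, u i * (v i 1 p * v i 2 q)
          = v i 0 1 * (v i 1 p * v i 2 q) + l1 * (v i 0 2 * (v i 1 p * v i 2 q)) := by
        intro i; rw [hu]; ring
      rw [Finset.sum_congr rfl fun i _ => this i, Finset.sum_add_distrib,
        ← Finset.mul_sum, hE1, hE2]
    -- second substitution: find i₁ with u i₁ ≠ 0
    have h1 : (∑ i : Fin 4, u i * (v i 1 0 * v i 2 1)) ≠ 0 := by
      rw [hU]; norm_num [Fin.ext_iff]
    obtain ⟨i₁, -, hi₁⟩ := Finset.exists_ne_zero_of_sum_ne_zero h1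
    have hui₁ : u i₁ ≠ 0 := left_ne_zero_of_mul hi₁
    set μ : ℝ := -(w i₁) / u i₁ with hμ
    set α : Fin 4 → ℝ := fun i => w i + μ * u i with hα
    have hαi₀ : α i₀ = 0 := by rw [hα]; simp [hwi₀, hui₀]
    have hαi₁ : α i₁ = 0 := by rw [hα]; simp only; rw [hμ]; field_simp; ring
    -- the resulting matrix identity
    have hM : ∀ p q : Fin 3, (∑ i : Fin 4, α i * (v i 1 p * v i 2 q))
        = ((if p = q then (1:ℝ) else 0) + l0 * (if p = 0 ∧ q = 2 then 1 else 0))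
          + μ * ((if p = 0 ∧ q = 1 then (1:ℝ) else 0) + l1 * (if p = 0 ∧ q = 2 then 1 else 0)) := by
      intro p q
      have : ∀ i : Fin 4, α i * (v i 1 p * v i 2 q)
          = w i * (v i 1 p * v i 2 q) + μ * (u i * (v i 1 p * v i 2 q)) := by
        intro i; rw [hα]; ring
      rw [Finset.sum_congr rfl fun i _ => this i, Finset.sum_add_distrib,
        ← Finset.mul_sum, hW, hU]
    -- the two remaining indices
    have hne : i₀ ≠ i₁ := fun h => hui₁ (by rw [← h, hui₀])
    obtain ⟨i₂, i₃, hcov⟩ : ∃ i₂ i₃ : Fin 4, ∀ i, i = i₀ ∨ i = i₁ ∨ i = i₂ ∨ i = i₃ := by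
      have : ∀ a b : Fin 4, a ≠ b → ∃ c d : Fin 4, ∀ i, i = a ∨ i = b ∨ i = c ∨ i = d := by
        decide
      exact this i₀ i₁ hne
    -- common kernel vector of the two remaining c's
    have hdet : (Matrix.of ![v i₂ 2, v i₃ 2, 0] : Matrix (Fin 3) (Fin 3) ℝ).det = 0 :=
      Matrix.det_eq_zero_of_row_eq_zero 2 (by simp)
    obtain ⟨z, hz0, hz⟩ := Matrix.exists_mulVec_eq_zero_iff.mpr hdet
    have hz2 : (∑ q : Fin 3, v i₂ 2 q * z q) = 0 := by
      have := congrFun hz 0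
      simpa [Matrix.mulVec, dotProduct] using this
    have hz3 : (∑ q : Fin 3, v i₃ 2 q * z q) = 0 := by
      have := congrFun hz 1
      simpa [Matrix.mulVec, dotProduct] using this
    -- M z = 0
    have hMz : ∀ p : Fin 3,
        (∑ q : Fin 3, (∑ i : Fin 4, α i * (v i 1 p * v i 2 q)) * z q) = 0 := by
      intro p
      simp only [Finset.sum_mul]
      rw [Finset.sum_comm]
      refine Finset.sum_eq_zero fun i _ => ?_
      have : (∑ q : Fin 3, α i * (v i 1 p * v i 2 q) * z q)
          = α i * v i 1 p * (∑ q : Fin 3, v i 2 q * z q) := by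
        rw [Finset.mul_sum]; exact Finset.sum_congr rfl fun q _ => by ring
      rw [this]
      rcases hcov i with h | h | h | h <;> subst h
      · rw [hαi₀]; ring
      · rw [hαi₁]; ring
      · rw [hz2]; ring
      · rw [hz3]; ring
    -- but M is invertible (unipotent upper triangular), so z = 0
    have e1 : z 1 = 0 := by
      have := hMz 1
      rw [Fin.sum_univ_three] at this
      simp only [hM] at this
      norm_num [Fin.ext_iff] at this
      exact this
    have e2 : z 2 = 0 := by
      have := hMz 2
      rw [Fin.sum_univ_three] at this
      simp only [hM] at this
      norm_num [Fin.ext_iff] at this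
      exact this
    have e0 : z 0 = 0 := by
      have := hMz 0
      rw [Fin.sum_univ_three] at this
      simp only [hM] at this
      norm_num [Fin.ext_iff, e1, e2] at this
      exact this
    apply hz0
    funext q
    fin_cases q <;> simp [e0, e1, e2]
end

section
/- Let e_1, e_2, e_3, e_4 be the standard basis of ℝ⁴ and let T = e_1 ⊗ e_1 ⊗ e_1 + e_1 ⊗ e_2 ⊗ e_2 + e_1 ⊗ e_3 ⊗ e_3 + e_1 ⊗ e_4 ⊗ e_4 + e_2 ⊗ e_1 ⊗ e_2 + e_3 ⊗ e_1 ⊗ e_3 + e_4 ⊗ e_1 ⊗ e_4 ∈ ℝ⁴ ⊗ ℝ⁴ ⊗ ℝ⁴. Then T has rank exactly 7: T is a sum of 7 rank-one tensors and is not a sum of 6 rank-one tensors. -/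
def subT (m : Fin 3) (c : Fin 4) (lam : Fin 4 → ℝ) (T : (Fin 3 → Fin 4) → ℝ) :
    (Fin 3 → Fin 4) → ℝ :=
  fun i => if i m = c then 0 else T i + lam (i m) * T (Function.update i m c)

lemma sub_step {r : ℕ} {T : (Fin 3 → Fin 4) → ℝ} (m : Fin 3) (c : Fin 4)
    (h : rankLE T (r + 1)) (i₀ : Fin 3 → Fin 4) (hi : i₀ m = c) (hTi : T i₀ ≠ 0) :
    ∃ lam : Fin 4 → ℝ, rankLE (subT m c lam T) r := by
  obtain ⟨v, hv⟩ := h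
  have ht0 : ∃ t0, v t0 m c ≠ 0 := by
    by_contra hall
    push_neg at hall
    apply hTi
    rw [hv, Finset.sum_apply]
    apply Finset.sum_eq_zero
    intro t _
    apply Finset.prod_eq_zero (Finset.mem_univ m)
    rw [hi]
    exact hall t
  obtain ⟨t0, ht0⟩ := ht0
  set lam : Fin 4 → ℝ := fun a => - v t0 m a / v t0 m c with hlam
  set w : Fin (r + 1) → Fin 3 → Fin 4 → ℝ :=
    fun t => Function.update (v t) m
      (fun a => if a = c then 0 else v t m a + lam a * v t m c) with hw
  have hwm : ∀ t a, w t m a = if a = c then 0 else v t m a + lam a * v t m c := by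
    intro t a; rw [hw]; simp
  have hwk : ∀ t k, k ≠ m → w t k = v t k := by
    intro t k hk; rw [hw]; simp [Function.update_of_ne hk]
  have hw0 : tensProdC (w t0) = 0 := by
    funext i
    show ∏ k, w t0 k (i k) = 0
    apply Finset.prod_eq_zero (Finset.mem_univ m)
    rw [hwm]
    by_cases hc : i m = c
    · simp [hc]
    · rw [if_neg hc, hlam]
      field_simp
      ring
  have key : subT m c lam T = ∑ t, tensProdC (w t) := by
    funext i
    show (if i m = c then (0:ℝ) else T i + lam (i m) * T (Function.update i m c))
      = (∑ t, tensProdC (w t)) i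
    by_cases him : i m = c
    · rw [if_pos him, Finset.sum_apply]
      symm
      apply Finset.sum_eq_zero
      intro t _
      apply Finset.prod_eq_zero (Finset.mem_univ m)
      rw [hwm, him, if_pos rfl]
    · rw [if_neg him, hv]
      simp only [Finset.sum_apply]
      rw [Finset.mul_sum, ← Finset.sum_add_distrib]
      apply Finset.sum_congr rfl
      intro t _
      show (∏ k, v t k (i k)) + lam (i m) * ∏ k, v t k (Function.update i m c k)
        = ∏ k, w t k (i k)
      have h1 : ∏ k, v t k (i k)
          = v t m (i m) * ∏ k ∈ Finset.univ.erase m, v t k (i k) :=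
        (Finset.mul_prod_erase _ _ (Finset.mem_univ m)).symm
      have h2 : ∏ k, v t k (Function.update i m c k)
          = v t m c * ∏ k ∈ Finset.univ.erase m, v t k (i k) := by
        rw [← Finset.mul_prod_erase _ (fun k => v t k (Function.update i m c k))
          (Finset.mem_univ m), Function.update_self]
        congr 1
        apply Finset.prod_congr rfl
        intro k hk
        rw [Function.update_of_ne (Finset.ne_of_mem_erase hk)]
      have h3 : ∏ k, w t k (i k)
          = (v t m (i m) + lam (i m) * v t m c)
            * ∏ k ∈ Finset.univ.erase m, v t k (i k) := by
        rw [← Finset.mul_prod_erase _ (fun k => w t k (i k)) (Finset.mem_univ m),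
          hwm, if_neg him]
        congr 1
        apply Finset.prod_congr rfl
        intro k hk
        rw [hwk t k (Finset.ne_of_mem_erase hk)]
      rw [h1, h2, h3]
      ring
  refine ⟨lam, fun s => w (t0.succAbove s), ?_⟩
  rw [key, Fin.sum_univ_succAbove _ t0, hw0, zero_add]

/-- The tensor `T = e₁⊗e₁⊗e₁ + e₁⊗e₂⊗e₂ + e₁⊗e₃⊗e₃ + e₁⊗e₄⊗e₄ + e₂⊗e₁⊗e₂
+ e₃⊗e₁⊗e₃ + e₄⊗e₁⊗e₄ ∈ ℝ⁴ ⊗ ℝ⁴ ⊗ ℝ⁴` has rank exactly 7. -/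
theorem stmt11 (e : Fin 4 → Fin 4 → ℝ) (he : ∀ a, e a = Pi.single a 1)
    (T : (Fin 3 → Fin 4) → ℝ)
    (hT : T = tensProdC ![e 0, e 0, e 0] + tensProdC ![e 0, e 1, e 1]
        + tensProdC ![e 0, e 2, e 2] + tensProdC ![e 0, e 3, e 3]
        + tensProdC ![e 1, e 0, e 1] + tensProdC ![e 2, e 0, e 2]
        + tensProdC ![e 3, e 0, e 3]) :
    rankLE T 7 ∧ ¬ rankLE T 6 := by
  have hTe : ∀ i : Fin 3 → Fin 4, T i =
      (if i 0 = 0 ∧ i 1 = i 2 then 1 else 0)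
      + (if i 1 = 0 ∧ i 0 = i 2 ∧ i 0 ≠ 0 then 1 else 0) := by
    intro i
    rw [hT]
    simp only [Pi.add_apply, tensProdC, Fin.prod_univ_three, Matrix.cons_val_zero,
      Matrix.cons_val_one, Matrix.head_cons, Matrix.cons_val_two, Matrix.tail_cons, he]
    generalize i 0 = a
    generalize i 1 = b
    generalize i 2 = c
    fin_cases a <;> fin_cases b <;> fin_cases c <;>
      simp (config := { decide := true }) [Pi.single_apply]
  constructor
  · refine ⟨![![e 0, e 0, e 0], ![e 0, e 1, e 1], ![e 0, e 2, e 2], ![e 0, e 3, e 3],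
      ![e 1, e 0, e 1], ![e 2, e 0, e 2], ![e 3, e 0, e 3]], ?_⟩
    rw [hT, Fin.sum_univ_seven]
    rfl
  · intro h6
    obtain ⟨l1, h5⟩ := sub_step 1 3 h6 ![0, 3, 3] rfl
      (by simp (config := { decide := true }) [hTe])
    obtain ⟨l2, h4⟩ := sub_step 1 2 h5 ![0, 2, 2] rfl
      (by simp (config := { decide := true }) [subT, hTe, Function.update_apply])
    obtain ⟨l3, h3⟩ := sub_step 1 1 h4 ![0, 1, 1] rfl
      (by simp (config := { decide := true }) [subT, hTe, Function.update_apply])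
    obtain ⟨l4, h2⟩ := sub_step 2 3 h3 ![3, 0, 3] rfl
      (by simp (config := { decide := true }) [subT, hTe, Function.update_apply])
    obtain ⟨l5, h1⟩ := sub_step 2 2 h2 ![2, 0, 2] rfl
      (by simp (config := { decide := true }) [subT, hTe, Function.update_apply])
    obtain ⟨l6, h0⟩ := sub_step 2 1 h1 ![1, 0, 1] rfl
      (by simp (config := { decide := true }) [subT, hTe, Function.update_apply])
    obtain ⟨v0, hv0⟩ := h0
    rw [show (Finset.univ : Finset (Fin 0)) = ∅ from rfl, Finset.sum_empty] at hv0
    have E1 := congrFun hv0 ![1, 0, 0]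
    have E2 := congrFun hv0 ![2, 0, 0]
    have E3 := congrFun hv0 ![3, 0, 0]
    have E4 := congrFun hv0 ![0, 0, 0]
    simp (config := { decide := true }) [subT, hTe, Function.update_apply] at E1 E2 E3 E4
    simp only [E1, zero_mul, add_zero] at E2 E3 E4
    simp only [E2, zero_mul, add_zero] at E3 E4
    simp only [E3, zero_mul, add_zero, zero_add] at E4
    exact one_ne_zero E4
end

section
/- Let n ≥ 2 and d ≥ 3, and define L : (ℤ/nℤ)^{d−1} → ℤ/nℤ by L(i_1,…,i_{d−1}) = i_{d−1} + Σ_{k=1}^{d−2} (−1)^{k+1} i_k. Let I = { (i_1,…,i_{d−1}, L(i_1,…,i_{d−1})) : i_k ∈ ℤ/nℤ } ⊆ (ℤ/nℤ)^d. Then there exists a subset J ⊆ I with |J| = n − 1 such that any two distinct elements of J have Hamming distance at least 3. -/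
private lemma mod_cases12 {n x y : ℕ} (hx : x < 2 * n) (hy : y < 2 * n)
    (h : x % n = y % n) : x = y ∨ x = y + n ∨ y = x + n := by
  rcases Nat.lt_or_ge x n with h1 | h1 <;> rcases Nat.lt_or_ge y n with h2 | h2
  · left; rwa [Nat.mod_eq_of_lt h1, Nat.mod_eq_of_lt h2] at h
  · rw [Nat.mod_eq_of_lt h1, Nat.mod_eq_sub_mod h2, Nat.mod_eq_of_lt (by omega)] at h
    omega
  · rw [Nat.mod_eq_sub_mod h1, Nat.mod_eq_of_lt (by omega), Nat.mod_eq_of_lt h2] at h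
    omega
  · rw [Nat.mod_eq_sub_mod h1, Nat.mod_eq_of_lt (by omega), Nat.mod_eq_sub_mod h2,
      Nat.mod_eq_of_lt (by omega)] at h
    omega

private lemma keyA12 {n a b : ℕ} (ha : a < n - 1) (hb : b < n - 1)
    (h : (a + if n % 2 = 0 ∧ n / 2 ≤ a then 1 else 0) % n
       = (b + if n % 2 = 0 ∧ n / 2 ≤ b then 1 else 0) % n) : a = b := by
  split_ifs at h <;>
    rw [Nat.mod_eq_of_lt (by omega), Nat.mod_eq_of_lt (by omega)] at h <;> omega

private lemma keyB12 {n a b : ℕ} (ha : a < n - 1) (hb : b < n - 1)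
    (h : (2 * a + if n % 2 = 0 ∧ n / 2 ≤ a then 1 else 0) % n
       = (2 * b + if n % 2 = 0 ∧ n / 2 ≤ b then 1 else 0) % n) : a = b := by
  split_ifs at h <;>
    rcases mod_cases12 (by omega) (by omega) h with h' | h' | h' <;> omega

/-- For `n ≥ 2`, `d ≥ 3`, and the Latin hypercube
`L(i₁,…,i_{d−1}) = i_{d−1} + Σ_{k=1}^{d−2} (−1)^{k+1} i_k` on `(ℤ/nℤ)^{d−1}`,
its graph `I = {(i, L(i))} ⊆ (ℤ/nℤ)^d` contains a subset `J` of size `n − 1`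
whose elements have pairwise Hamming distance at least 3. -/
theorem stmt12 (n d : ℕ) (hn : 2 ≤ n) (hd : 3 ≤ d) :
    ∃ J : Finset (Fin d → ZMod n),
      (∀ j ∈ J, j ⟨d - 1, by omega⟩ =
        j ⟨d - 2, by omega⟩ +
          ∑ k : Fin (d - 2), (-1 : ZMod n) ^ (k : ℕ) * j (Fin.castLE (by omega) k)) ∧
      J.card = n - 1 ∧
      (∀ a ∈ J, ∀ b ∈ J, a ≠ b → 3 ≤ hammingDist a b) := by
  have hnz : NeZero n := ⟨by omega⟩
  -- the "y" value as a natural number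
  set g : Fin (n - 1) → ℕ :=
    fun p => (p : ℕ) + if n % 2 = 0 ∧ n / 2 ≤ (p : ℕ) then 1 else 0 with hg
  set f : Fin (n - 1) → (Fin d → ZMod n) := fun p i =>
    if (i : ℕ) = 0 then ((p : ℕ) : ZMod n)
    else if (i : ℕ) = d - 2 then ((g p : ℕ) : ZMod n)
    else if (i : ℕ) = d - 1 then ((p : ℕ) : ZMod n) + ((g p : ℕ) : ZMod n)
    else 0 with hf
  -- coordinate values
  have hval0 : ∀ p : Fin (n - 1), ∀ i : Fin d, (i : ℕ) = 0 →
      f p i = ((p : ℕ) : ZMod n) := by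
    intro p i hi; simp [hf, hi]
  have hval1 : ∀ p : Fin (n - 1), ∀ i : Fin d, (i : ℕ) = d - 2 →
      f p i = ((g p : ℕ) : ZMod n) := by
    intro p i hi; simp only [hf, hi]
    rw [if_neg (by omega)]; simp
  have hval2 : ∀ p : Fin (n - 1), ∀ i : Fin d, (i : ℕ) = d - 1 →
      f p i = ((p : ℕ) : ZMod n) + ((g p : ℕ) : ZMod n) := by
    intro p i hi; simp only [hf, hi]
    rw [if_neg (by omega), if_neg (by omega)]; simp
  have hvalz : ∀ p : Fin (n - 1), ∀ i : Fin d,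
      (i : ℕ) ≠ 0 → (i : ℕ) ≠ d - 2 → (i : ℕ) ≠ d - 1 → f p i = 0 := by
    intro p i h0 h1 h2; simp only [hf]
    rw [if_neg h0, if_neg h1, if_neg h2]
  -- injectivity facts
  have hxinj : ∀ p q : Fin (n - 1), ((p : ℕ) : ZMod n) = ((q : ℕ) : ZMod n) → p = q := by
    intro p q h
    rw [ZMod.natCast_eq_natCast_iff] at h
    have hp := p.isLt; have hq := q.isLt
    have := (Nat.ModEq.eq_of_lt_of_lt h (by omega) (by omega))
    exact Fin.ext this
  have hyinj : ∀ p q : Fin (n - 1), ((g p : ℕ) : ZMod n) = ((g q : ℕ) : ZMod n) → p = q := by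
    intro p q h
    rw [ZMod.natCast_eq_natCast_iff] at h
    exact Fin.ext (keyA12 p.isLt q.isLt h)
  have hzinj : ∀ p q : Fin (n - 1),
      ((p : ℕ) : ZMod n) + ((g p : ℕ) : ZMod n)
        = ((q : ℕ) : ZMod n) + ((g q : ℕ) : ZMod n) → p = q := by
    intro p q h
    have h' : (((p : ℕ) + g p : ℕ) : ZMod n) = (((q : ℕ) + g q : ℕ) : ZMod n) := by
      push_cast; exact h
    rw [ZMod.natCast_eq_natCast_iff] at h'
    refine Fin.ext (keyB12 p.isLt q.isLt ?_)
    have : (p : ℕ) + g p = 2 * (p : ℕ) + (if n % 2 = 0 ∧ n / 2 ≤ (p : ℕ) then 1 else 0) := by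
      simp [hg]; omega
    have hq : (q : ℕ) + g q = 2 * (q : ℕ) + (if n % 2 = 0 ∧ n / 2 ≤ (q : ℕ) then 1 else 0) := by
      simp [hg]; omega
    rwa [this, hq] at h'
  have hfinj : Function.Injective f := by
    intro p q h
    exact hxinj p q (by
      have := congrFun h ⟨0, by omega⟩
      rwa [hval0 p _ rfl, hval0 q _ rfl] at this)
  refine ⟨Finset.image f Finset.univ, ?_, ?_, ?_⟩
  · -- the linear relation
    intro j hj
    simp only [Finset.mem_image, Finset.mem_univ, true_and] at hj
    obtain ⟨p, rfl⟩ := hj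
    rw [hval2 p _ rfl, hval1 p _ rfl]
    have hsum : ∑ k : Fin (d - 2), (-1 : ZMod n) ^ (k : ℕ) * f p (Fin.castLE (by omega) k)
        = ((p : ℕ) : ZMod n) := by
      rw [Finset.sum_eq_single (⟨0, by omega⟩ : Fin (d - 2))]
      · rw [hval0 p _ rfl]; simp
      · intro k _ hk
        have hk0 : (k : ℕ) ≠ 0 := fun h => hk (Fin.ext h)
        rw [hvalz p _ hk0 (by have := k.isLt; simp only [Fin.coe_castLE]; omega)
          (by have := k.isLt; simp only [Fin.coe_castLE]; omega)]
        ring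
      · simp
    rw [hsum]; ring
  · -- cardinality
    rw [Finset.card_image_of_injective _ hfinj, Finset.card_univ, Fintype.card_fin]
  · -- Hamming distance
    intro a ha b hb hab
    simp only [Finset.mem_image, Finset.mem_univ, true_and] at ha hb
    obtain ⟨p, rfl⟩ := ha
    obtain ⟨q, rfl⟩ := hb
    have hpq : p ≠ q := fun h => hab (by rw [h])
    have hS : ({⟨0, by omega⟩, ⟨d - 2, by omega⟩, ⟨d - 1, by omega⟩} : Finset (Fin d))
        ⊆ Finset.univ.filter (fun i => f p i ≠ f q i) := by
      intro i hi
      simp only [Finset.mem_insert, Finset.mem_singleton] at hi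
      rw [Finset.mem_filter]
      refine ⟨Finset.mem_univ _, ?_⟩
      rcases hi with rfl | rfl | rfl
      · rw [hval0 p _ rfl, hval0 q _ rfl]
        exact fun h => hpq (hxinj p q h)
      · rw [hval1 p _ rfl, hval1 q _ rfl]
        exact fun h => hpq (hyinj p q h)
      · rw [hval2 p _ rfl, hval2 q _ rfl]
        exact fun h => hpq (hzinj p q h)
    have hcard : ({⟨0, by omega⟩, ⟨d - 2, by omega⟩, ⟨d - 1, by omega⟩} : Finset (Fin d)).card
        = 3 := by
      rw [Finset.card_insert_of_notMem, Finset.card_insert_of_notMem,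
        Finset.card_singleton]
      · simp only [Finset.mem_singleton]
        intro h; have := congrArg Fin.val h; simp only at this; omega
      · simp only [Finset.mem_insert, Finset.mem_singleton]
        rintro (h | h) <;> · have := congrArg Fin.val h; simp at this; omega
    calc 3 = ({⟨0, by omega⟩, ⟨d - 2, by omega⟩, ⟨d - 1, by omega⟩} : Finset (Fin d)).card :=
          hcard.symm
      _ ≤ (Finset.univ.filter (fun i => f p i ≠ f q i)).card := Finset.card_le_card hS
      _ = hammingDist (f p) (f q) := rfl
end

section
/- Let n ≥ 2 and d ≥ 2, and let I = { (i_1,…,i_d) ∈ (ℤ/nℤ)^d : i_1 + ⋯ + i_d = 0 }. Then |I| = n^{d−1}, any two distinct elements of I have Hamming distance at least 2, and consequently for any scalars λ : I → ℝ∖{0}, the expression Σ_{i∈I} λ_i e_{i_1} ⊗ ⋯ ⊗ e_{i_d} (with e indexed by ℤ/nℤ the standard orthonormal basis of ℝ^n) is a two-orthogonal decomposition of length n^{d−1} in (ℝ^n)^{⊗d}. -/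
/-- The rank-one tensor `v₁ ⊗ ⋯ ⊗ v_d` in `(ℝ^n)^{⊗d}` (with the coordinates of
`ℝ^n` indexed by `ℤ/nℤ`), as an array. -/
def tensProdZ {d n : ℕ} [NeZero n] (v : Fin d → ZMod n → ℝ) :
    (Fin d → ZMod n) → ℝ :=
  fun i => ∏ k, v k (i k)

lemma fdot_single_single {n : ℕ} [NeZero n] {a b : ZMod n} (hab : a ≠ b) :
    fdot (Pi.single a (1 : ℝ)) (Pi.single b (1 : ℝ)) = 0 := by
  unfold fdot
  apply Finset.sum_eq_zero
  intro x _
  rcases eq_or_ne x a with rfl | hxa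
  · simp [Pi.single_apply, hab]
  · simp [Pi.single_apply, hxa]

/-- For `I = {i ∈ (ℤ/nℤ)^d : i₁ + ⋯ + i_d = 0}` one has `|I| = n^{d−1}`, distinct
elements of `I` have Hamming distance at least 2, and for any nonzero scalars `λ`,
the expression `Σ_{i∈I} λᵢ e_{i₁} ⊗ ⋯ ⊗ e_{i_d}` is a two-orthogonal decomposition
of length `n^{d−1}`: its summands are nonzero and any two distinct summands are
orthogonal in at least two factors. -/
theorem stmt13 (n d : ℕ) [NeZero n] (hn : 2 ≤ n) (hd : 2 ≤ d)
    (I : Finset (Fin d → ZMod n))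
    (hI : I = Finset.univ.filter (fun i : Fin d → ZMod n => ∑ k, i k = 0)) :
    I.card = n ^ (d - 1) ∧
    (∀ i ∈ I, ∀ j ∈ I, i ≠ j → 2 ≤ hammingDist i j) ∧
    (∀ lam : (Fin d → ZMod n) → ℝ, (∀ i ∈ I, lam i ≠ 0) →
      (∀ i ∈ I, lam i • tensProdZ (fun k => Pi.single (i k) (1 : ℝ)) ≠ 0) ∧
      (∀ i ∈ I, ∀ j ∈ I, i ≠ j → ∃ k₁ k₂ : Fin d, k₁ ≠ k₂ ∧
        fdot (Pi.single (i k₁) (1 : ℝ)) (Pi.single (j k₁) (1 : ℝ)) = 0 ∧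
        fdot (Pi.single (i k₂) (1 : ℝ)) (Pi.single (j k₂) (1 : ℝ)) = 0)) := by
  have hmem : ∀ i, i ∈ I ↔ ∑ k, i k = 0 := by
    intro i; simp [hI]
  -- Hamming distance ≥ 2
  have hdist : ∀ i ∈ I, ∀ j ∈ I, i ≠ j → 2 ≤ hammingDist i j := by
    intro i hi j hj hij
    by_contra h
    push_neg at h
    have h1 : hammingDist i j ≠ 0 := by
      simpa [hammingDist_eq_zero] using hij
    have h2 : hammingDist i j = 1 := by omega
    rw [hammingDist, Finset.card_eq_one] at h2
    obtain ⟨k, hk⟩ := h2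
    have hne : i k ≠ j k := by
      have : k ∈ ({k} : Finset (Fin d)) := Finset.mem_singleton_self k
      rw [← hk, Finset.mem_filter] at this
      exact this.2
    have heq : ∀ m, m ≠ k → i m = j m := by
      intro m hm
      by_contra hmm
      have : m ∈ ({k} : Finset (Fin d)) := by
        rw [← hk, Finset.mem_filter]; exact ⟨Finset.mem_univ _, hmm⟩
      exact hm (Finset.mem_singleton.mp this)
    have hsi : i k + ∑ m ∈ Finset.univ.erase k, i m = 0 := by
      rw [Finset.add_sum_erase _ _ (Finset.mem_univ k)]
      exact (hmem i).mp hi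
    have hsj : j k + ∑ m ∈ Finset.univ.erase k, j m = 0 := by
      rw [Finset.add_sum_erase _ _ (Finset.mem_univ k)]
      exact (hmem j).mp hj
    have hsum : ∑ m ∈ Finset.univ.erase k, i m = ∑ m ∈ Finset.univ.erase k, j m :=
      Finset.sum_congr rfl fun m hm => heq m (Finset.ne_of_mem_erase hm)
    rw [hsum] at hsi
    exact hne (by linear_combination hsi - hsj)
  refine ⟨?_, hdist, ?_⟩
  · -- cardinality
    obtain ⟨m, rfl⟩ : ∃ m, d = m + 1 := ⟨d - 1, by omega⟩
    rw [hI]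
    have hcard : (Finset.univ.filter fun i : Fin (m + 1) → ZMod n => ∑ k, i k = 0).card
        = (Finset.univ : Finset (Fin m → ZMod n)).card := by
      apply Finset.card_nbij' (fun i => Fin.init i)
        (fun v => Fin.snoc v (-∑ k, v k))
      · intro a _; exact Finset.mem_univ _
      · intro v _
        rw [Finset.mem_coe, Finset.mem_filter]
        refine ⟨Finset.mem_univ _, ?_⟩
        rw [Fin.sum_univ_castSucc]
        simp [Fin.snoc_castSucc, Fin.snoc_last]
      · intro a ha
        rw [Finset.mem_coe, Finset.mem_filter] at ha
        have hlast : -∑ k : Fin m, Fin.init a k = a (Fin.last m) := by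
          have := ha.2
          rw [Fin.sum_univ_castSucc] at this
          have h2 : ∑ k : Fin m, Fin.init a k = ∑ k : Fin m, a k.castSucc :=
            Finset.sum_congr rfl fun k _ => rfl
          rw [h2]
          linear_combination -this
        beta_reduce
        rw [hlast]
        exact Fin.snoc_init_self a
      · intro v _
        funext k
        simp [Fin.init, Fin.snoc_castSucc]
    rw [hcard]
    simp [ZMod.card]
  · intro lam hlam
    constructor
    · intro i hi hzero
      have := congrFun hzero i
      have hval : tensProdZ (fun k => Pi.single (i k) (1 : ℝ)) i = 1 := by
        simp [tensProdZ]
      rw [Pi.smul_apply, hval, smul_eq_mul, mul_one] at this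
      exact hlam i hi this
    · intro i hi j hj hij
      have h2 := hdist i hi j hj hij
      rw [hammingDist] at h2
      obtain ⟨k₁, hk₁, k₂, hk₂, hkk⟩ := Finset.one_lt_card.mp h2
      rw [Finset.mem_filter] at hk₁ hk₂
      exact ⟨k₁, k₂, hkk, fdot_single_single hk₁.2, fdot_single_single hk₂.2⟩
end

section
/- Let d ≥ 2 and r ≥ 1. There exist bipartite simple graphs G_1,…,G_d on the vertex set {1,…,r} such that every pair of distinct vertices u ≠ v is adjacent in at least two of the graphs G_1,…,G_d, if and only if r ≤ 2^{d−1}. -/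
/-- There exist bipartite simple graphs `G₁,…,G_d` on `r` vertices such that every
pair of distinct vertices is adjacent in at least two of them, if and only if
`r ≤ 2^{d−1}`. -/
theorem stmt16 (d r : ℕ) (hd : 2 ≤ d) (hr : 1 ≤ r) :
    (∃ G : Fin d → SimpleGraph (Fin r),
      (∀ j, ∃ s : Fin r → Bool, ∀ u v, (G j).Adj u v → s u ≠ s v) ∧
      (∀ u v : Fin r, u ≠ v →
        ∃ j₁ j₂ : Fin d, j₁ ≠ j₂ ∧ (G j₁).Adj u v ∧ (G j₂).Adj u v))
    ↔ r ≤ 2 ^ (d - 1) := by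
  obtain ⟨m, rfl⟩ : ∃ m, d = m + 1 := ⟨d - 1, by omega⟩
  simp only [Nat.add_sub_cancel]
  constructor
  · rintro ⟨G, hbip, hcov⟩
    choose s hs using hbip
    have hinj : Function.Injective
        (fun u : Fin r => fun i : Fin m => s i.castSucc u) := by
      intro u v huv
      by_contra hne
      obtain ⟨j₁, j₂, hj, h1, h2⟩ := hcov u v hne
      have key : ∀ j : Fin (m+1), s j u ≠ s j v → j = Fin.last m := by
        intro j hj'
        by_contra hlast
        obtain ⟨i, rfl⟩ := Fin.exists_castSucc_eq.mpr hlast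
        exact hj' (congrFun huv i)
      exact hj ((key j₁ (hs j₁ u v h1)).trans (key j₂ (hs j₂ u v h2)).symm)
    calc r = Fintype.card (Fin r) := (Fintype.card_fin r).symm
      _ ≤ Fintype.card (Fin m → Bool) := Fintype.card_le_of_injective _ hinj
      _ = 2 ^ m := by simp
  · intro hle
    have hcard : Fintype.card (Fin r) ≤ Fintype.card (Fin m → Bool) := by
      simpa using hle
    obtain ⟨c⟩ := Function.Embedding.nonempty_of_card_le hcard
    let g : Fin r → Fin m → ZMod 2 := fun u i => if c u i then 1 else 0
    let f : Fin r → Fin (m+1) → ZMod 2 := fun u => Fin.snoc (g u) (∑ i, g u i)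
    have hsum : ∀ u, ∑ j, f u j = 0 := by
      intro u
      rw [Fin.sum_univ_castSucc]
      simp only [f, Fin.snoc_castSucc, Fin.snoc_last]
      exact CharTwo.add_self_eq_zero _
    refine ⟨fun j => ⟨fun u v => u ≠ v ∧ f u j ≠ f v j, ?_, ?_⟩, ?_, ?_⟩
    · constructor; rintro u v ⟨h1, h2⟩; exact ⟨h1.symm, h2.symm⟩
    · constructor; rintro u ⟨h, _⟩; exact h rfl
    · intro j
      refine ⟨fun u => decide (f u j = 1), ?_⟩
      rintro u v ⟨_, hne⟩
      simp only [ne_eq, decide_eq_decide]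
      intro h
      apply hne
      have hx : ∀ x : ZMod 2, x = 0 ∨ x = 1 := by decide
      rcases hx (f u j) with h1 | h1 <;> rcases hx (f v j) with h2 | h2 <;>
        simp_all
    · intro u v huv
      have hfne : ∃ j, f u j ≠ f v j := by
        have hcuv : c u ≠ c v := fun h => huv (c.injective h)
        obtain ⟨i, hi⟩ := Function.ne_iff.mp hcuv
        refine ⟨i.castSucc, ?_⟩
        simp only [f, Fin.snoc_castSucc, g]
        cases hb : c u i <;> cases hb' : c v i <;> simp_all
      set S := Finset.univ.filter (fun j => f u j ≠ f v j) with hSdef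
      have hS1 : S.Nonempty := by
        obtain ⟨j, hj⟩ := hfne
        exact ⟨j, Finset.mem_filter.mpr ⟨Finset.mem_univ j, hj⟩⟩
      have hS2 : 2 ∣ S.card := by
        have key : (S.card : ZMod 2) = 0 := by
          have e1 : ∀ a b : ZMod 2, (if a ≠ b then (1 : ZMod 2) else 0) = a + b := by
            decide
          calc (S.card : ZMod 2) = ∑ _j ∈ S, (1 : ZMod 2) := by simp
            _ = ∑ j, (if f u j ≠ f v j then (1 : ZMod 2) else 0) := by
                rw [hSdef, Finset.sum_filter]
            _ = ∑ j, (f u j + f v j) := by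
                exact Finset.sum_congr rfl fun j _ => e1 _ _
            _ = 0 := by rw [Finset.sum_add_distrib, hsum, hsum, add_zero]
        exact (ZMod.natCast_eq_zero_iff _ 2).mp key
      have hlt : 1 < S.card := by
        have := Finset.card_pos.mpr hS1
        omega
      obtain ⟨j₁, hj₁, j₂, hj₂, hne⟩ := Finset.one_lt_card.mp hlt
      exact ⟨j₁, j₂, hne, ⟨huv, (Finset.mem_filter.mp hj₁).2⟩,
        ⟨huv, (Finset.mem_filter.mp hj₂).2⟩⟩
end

section
/- Let d ≥ 2 and r = 2^{d−1}. Let G_1,…,G_d be simple graphs on the vertex set {1,…,r}, each a disjoint union of complete bipartite graphs, such that every pair of distinct vertices is adjacent in at least two of the graphs G_1,…,G_d. Then each G_j is a connected complete bipartite graph K_{2^{d−2}, 2^{d−2}}: there is a function s_j : {1,…,r} → {0,1} taking each value on exactly 2^{d−2} vertices, with u adjacent to v in G_j if and only if s_j(u) ≠ s_j(v). -/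
/-- Let `r = 2^{d−1}` and let `G₁,…,G_d` be simple graphs on `r` vertices, each a
disjoint union of complete bipartite graphs, such that every pair of distinct
vertices is adjacent in at least two of the graphs. Then each `G_j` is the
complete bipartite graph `K_{2^{d−2}, 2^{d−2}}`. -/
theorem stmt17 (d : ℕ) (hd : 2 ≤ d)
    (G : Fin d → SimpleGraph (Fin (2 ^ (d - 1))))
    (hbip : ∀ j, ∃ (C : Type) (c : Fin (2 ^ (d - 1)) → C)
        (s : Fin (2 ^ (d - 1)) → Bool),
      ∀ u v, (G j).Adj u v ↔ (c u = c v ∧ s u ≠ s v))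
    (h2 : ∀ u v : Fin (2 ^ (d - 1)), u ≠ v →
      ∃ j₁ j₂ : Fin d, j₁ ≠ j₂ ∧ (G j₁).Adj u v ∧ (G j₂).Adj u v) :
    ∀ j, ∃ s : Fin (2 ^ (d - 1)) → Bool,
      (Finset.univ.filter (fun v => s v = true)).card = 2 ^ (d - 2) ∧
      (Finset.univ.filter (fun v => s v = false)).card = 2 ^ (d - 2) ∧
      (∀ u v, (G j).Adj u v ↔ s u ≠ s v) := by
  classical
  choose C c s hcs using hbip
  intro j
  -- the vector of sides of each vertex
  set S : Fin (2 ^ (d - 1)) → Fin d → Bool := fun v i => s i v with hS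
  have hadjS : ∀ i u v, (G i).Adj u v → S u i ≠ S v i :=
    fun i u v h => ((hcs i u v).1 h).2
  -- distinct vertices differ in at least two coordinates
  have hdist : ∀ u v : Fin (2 ^ (d - 1)), u ≠ v →
      ∃ i₁ i₂ : Fin d, i₁ ≠ i₂ ∧ S u i₁ ≠ S v i₁ ∧ S u i₂ ≠ S v i₂ := by
    intro u v h
    obtain ⟨i₁, i₂, h12, ha1, ha2⟩ := h2 u v h
    exact ⟨i₁, i₂, h12, hadjS _ _ _ ha1, hadjS _ _ _ ha2⟩
  -- if two vertices agree off a single coordinate, they are equal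
  have honly : ∀ (u v : Fin (2 ^ (d - 1))) (k : Fin d),
      (∀ i, i ≠ k → S u i = S v i) → u = v := by
    intro u v k hk
    by_contra h
    obtain ⟨i₁, i₂, h12, hd1, hd2⟩ := hdist u v h
    have e1 : i₁ = k := by by_contra hh; exact hd1 (hk _ hh)
    have e2 : i₂ = k := by by_contra hh; exact hd2 (hk _ hh)
    exact h12 (e1.trans e2.symm)
  have hdpos : 0 < d := by omega
  have hSinj : Function.Injective S := by
    intro u v h
    exact honly u v ⟨0, hdpos⟩ (fun i _ => by rw [h])
  -- arithmetic helpers (stated early, in a context free of Finset hypotheses,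
  -- to keep `omega` happy)
  have harith1 : ∀ m n : ℕ, m = n → m + n = 2 ^ d → m = 2 ^ (d - 1) := by
    intro m n h1 h2
    have hd1 : d - 1 + 1 = d := by omega
    have h2d : 2 ^ d = 2 ^ (d - 1) * 2 := by
      conv_lhs => rw [← hd1]
      exact pow_succ 2 (d - 1)
    omega
  have harith2 : ∀ m n : ℕ, m = n → m + n = 2 ^ (d - 1) →
      m = 2 ^ (d - 2) ∧ n = 2 ^ (d - 2) := by
    intro m n h1 h2
    have hd2 : d - 2 + 1 = d - 1 := by omega
    have h2d : 2 ^ (d - 1) = 2 ^ (d - 2) * 2 := by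
      conv_lhs => rw [← hd2]
      exact pow_succ 2 (d - 2)
    omega
  -- flipping one coordinate
  set flip : Fin d → (Fin d → Bool) → (Fin d → Bool) :=
    fun k x i => if i = k then !x i else x i with hflip
  have hflip_ne : ∀ (k : Fin d) (x : Fin d → Bool) (i : Fin d), i ≠ k →
      flip k x i = x i := by
    intro k x i hi; simp [hflip, hi]
  have hflip_eq : ∀ (k : Fin d) (x : Fin d → Bool), flip k x k = !x k := by
    intro k x; simp [hflip]
  -- cardinality of a coordinate hyperplane in the cube
  have hcardA : ∀ k : Fin d,
      (Finset.univ.filter (fun f : Fin d → Bool => f k = false)).card = 2 ^ (d - 1) := by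
    intro k
    have hbij : (Finset.univ.filter (fun f : Fin d → Bool => f k = false)).card
        = (Finset.univ.filter (fun f : Fin d → Bool => ¬ (f k = false))).card := by
      apply Finset.card_bij' (fun f _ => flip k f) (fun f _ => flip k f)
      · intro f hf
        simp only [Finset.mem_filter, Finset.mem_univ, true_and] at hf ⊢
        rw [hflip_eq, hf]; simp
      · intro f hf
        simp only [Finset.mem_filter, Finset.mem_univ, true_and] at hf ⊢
        have hfk : f k = true := by revert hf; cases f k <;> simp
        rw [hflip_eq, hfk]
        rfl
      · intro f _
        funext i
        by_cases hi : i = k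
        · subst hi; rw [hflip_eq, hflip_eq, Bool.not_not]
        · rw [hflip_ne _ _ _ hi, hflip_ne _ _ _ hi]
      · intro f _
        funext i
        by_cases hi : i = k
        · subst hi; rw [hflip_eq, hflip_eq, Bool.not_not]
        · rw [hflip_ne _ _ _ hi, hflip_ne _ _ _ hi]
    have hsum := Finset.card_filter_add_card_filter_not
      (s := (Finset.univ : Finset (Fin d → Bool)))
      (p := fun f => f k = false)
    have hcube : (Finset.univ : Finset (Fin d → Bool)).card = 2 ^ d := by
      simp [Fintype.card_fun]
    exact harith1 _ _ hbij (hsum.trans hcube)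
  -- for any x and any coordinate k, x or its k-flip is realized
  have hsurj : ∀ (k : Fin d) (x : Fin d → Bool),
      (∃ v, S v = x) ∨ (∃ v, S v = flip k x) := by
    intro k x
    set E : Fin (2 ^ (d - 1)) → (Fin d → Bool) :=
      fun v i => if i = k then false else S v i with hE
    have hEinj : Function.Injective E := by
      intro u v h
      apply honly u v k
      intro i hi
      have := congrFun h i
      simpa [hE, hi] using this
    have himg : Finset.univ.image E
        = Finset.univ.filter (fun f : Fin d → Bool => f k = false) := by
      apply Finset.eq_of_subset_of_card_le
      · intro f hf
        simp only [Finset.mem_image] at hf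
        obtain ⟨v, -, rfl⟩ := hf
        simp [hE]
      · rw [hcardA k, Finset.card_image_of_injective _ hEinj]
        simp
    have hx' : (fun i => if i = k then false else x i)
        ∈ Finset.univ.filter (fun f : Fin d → Bool => f k = false) :=
      Finset.mem_filter.2 ⟨Finset.mem_univ _, if_pos rfl⟩
    rw [← himg] at hx'
    obtain ⟨v, -, hv⟩ := Finset.mem_image.1 hx'
    have hoff : ∀ i, i ≠ k → S v i = x i := by
      intro i hi
      have := congrFun hv i
      simpa [hE, hi] using this
    by_cases hb : S v k = x k
    · left
      refine ⟨v, funext fun i => ?_⟩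
      by_cases hi : i = k
      · rw [hi]; exact hb
      · exact hoff i hi
    · right
      refine ⟨v, funext fun i => ?_⟩
      by_cases hi : i = k
      · rw [hi, hflip_eq]
        revert hb
        cases x k <;> cases S v k <;> simp
      · rw [hflip_ne _ _ _ hi]; exact hoff i hi
  -- ... but not both
  have hnotboth : ∀ (k : Fin d) (u : Fin (2 ^ (d - 1))) (w : Fin (2 ^ (d - 1))),
      S w = flip k (S u) → False := by
    intro k u w hw
    have huw : u = w := honly u w k (fun i hi => by rw [hw, hflip_ne _ _ _ hi])
    subst huw
    have := congrFun hw k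
    rw [hflip_eq] at this
    cases h : S u k <;> simp [h] at this
  -- the image of S is closed under double flips
  have hclos : ∀ (k l : Fin d), k ≠ l → ∀ u, ∃ w, S w = flip k (flip l (S u)) := by
    intro k l hkl u
    rcases hsurj k (flip l (S u)) with ⟨w, hw⟩ | h
    · exact absurd hw (fun hw => hnotboth l u w hw)
    · exact h
  -- pick a coordinate different from j
  have hcard_d : 1 < Fintype.card (Fin d) := by simpa using (show 1 < d by omega)
  obtain ⟨k₀, hk₀⟩ := Fintype.exists_ne_of_one_lt_card hcard_d j
  -- the involution swapping the two sides of G j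
  set φ : Fin (2 ^ (d - 1)) → Fin (2 ^ (d - 1)) :=
    fun v => Classical.choose (hclos j k₀ (Ne.symm hk₀) v) with hφdef
  have hφ : ∀ v, S (φ v) = flip j (flip k₀ (S v)) :=
    fun v => Classical.choose_spec (hclos j k₀ (Ne.symm hk₀) v)
  have hφj : ∀ v, S (φ v) j = !(S v j) := by
    intro v
    rw [hφ v, hflip_eq, hflip_ne _ _ _ (Ne.symm hk₀)]
  have hφφ : ∀ v, φ (φ v) = v := by
    intro v
    apply hSinj
    rw [hφ, hφ]
    funext i
    by_cases hij : i = j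
    · subst hij
      rw [hflip_eq, hflip_ne _ _ _ (Ne.symm hk₀), hflip_eq,
        hflip_ne _ _ _ (Ne.symm hk₀), Bool.not_not]
    · by_cases hik : i = k₀
      · subst hik
        rw [hflip_ne _ _ _ hk₀, hflip_eq, hflip_ne _ _ _ hk₀, hflip_eq,
          Bool.not_not]
      · rw [hflip_ne _ _ _ hij, hflip_ne _ _ _ hik, hflip_ne _ _ _ hij,
          hflip_ne _ _ _ hik]
  -- the two sides of G j have equal size
  have hTF : (Finset.univ.filter (fun v : Fin (2 ^ (d - 1)) => S v j = true)).card
      = (Finset.univ.filter (fun v : Fin (2 ^ (d - 1)) => S v j = false)).card := by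
    apply Finset.card_bij' (fun v _ => φ v) (fun v _ => φ v)
    · intro v hv
      simp only [Finset.mem_filter, Finset.mem_univ, true_and] at hv ⊢
      rw [hφj, hv]; rfl
    · intro v hv
      simp only [Finset.mem_filter, Finset.mem_univ, true_and] at hv ⊢
      rw [hφj, hv]; rfl
    · intro v _; exact hφφ v
    · intro v _; exact hφφ v
  have hTFsum : (Finset.univ.filter (fun v : Fin (2 ^ (d - 1)) => S v j = true)).card
      + (Finset.univ.filter (fun v : Fin (2 ^ (d - 1)) => S v j = false)).card
      = 2 ^ (d - 1) := by
    have hsum := Finset.card_filter_add_card_filter_not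
      (s := (Finset.univ : Finset (Fin (2 ^ (d - 1)))))
      (p := fun v => S v j = true)
    simp only [Bool.not_eq_true] at hsum
    simpa using hsum
  obtain ⟨hcardT, hcardF⟩ := harith2 _ _ hTF hTFsum
  -- if two vertices differ at j and agree off {j, k}, they are adjacent in G j
  have hstep : ∀ (k : Fin d), k ≠ j → ∀ u v,
      (∀ i, i ≠ j → i ≠ k → S u i = S v i) → S u j ≠ S v j → (G j).Adj u v := by
    intro k hk u v hoff hj
    have hne : u ≠ v := fun h => hj (by rw [h])
    obtain ⟨i₁, i₂, h12, ha1, ha2⟩ := h2 u v hne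
    have hmem : ∀ i, (G i).Adj u v → i = j ∨ i = k := by
      intro i hai
      by_contra h
      push_neg at h
      exact hadjS i u v hai (hoff i h.1 h.2)
    rcases hmem i₁ ha1 with rfl | rfl
    · exact ha1
    · rcases hmem i₂ ha2 with rfl | rfl
      · exact ha2
      · exact absurd rfl h12
  -- c j is constant
  have hconst : ∀ u v, c j u = c j v := by
    suffices h : ∀ (m : ℕ) (u v : Fin (2 ^ (d - 1))),
        (Finset.univ.filter (fun i => i ≠ j ∧ S u i ≠ S v i)).card = m →
        c j u = c j v by
      intro u v; exact h _ u v rfl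
    intro m
    induction m using Nat.strong_induction_on with
    | _ m ih =>
      intro u v hm
      rcases Nat.eq_zero_or_pos m with rfl | hpos
      · have hall : ∀ i, i ≠ j → S u i = S v i := by
          intro i hi
          by_contra h
          have hmem : i ∈ Finset.univ.filter (fun i => i ≠ j ∧ S u i ≠ S v i) := by
            simp [hi, h]
          rw [Finset.card_eq_zero] at hm
          rw [hm] at hmem
          exact absurd hmem (Finset.notMem_empty i)
        rw [honly u v j hall]
      · have hne0 : (Finset.univ.filter (fun i => i ≠ j ∧ S u i ≠ S v i)).Nonempty := by
          rw [← Finset.card_pos, hm]; exact hpos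
        obtain ⟨k, hk⟩ := hne0
        have hkmem := hk
        simp only [Finset.mem_filter, Finset.mem_univ, true_and] at hk
        obtain ⟨hkj, hkd⟩ := hk
        obtain ⟨w, hw⟩ := hclos j k (Ne.symm hkj) u
        have h1 : (G j).Adj u w := by
          apply hstep k hkj u w
          · intro i hij hik
            rw [hw, hflip_ne _ _ _ hij, hflip_ne _ _ _ hik]
          · rw [hw, hflip_eq, hflip_ne _ _ _ (Ne.symm hkj)]
            cases h : S u j <;> simp [h]
        have hcuw : c j u = c j w := ((hcs j u w).1 h1).1
        have hwk : S w k = S v k := by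
          rw [hw, hflip_ne _ _ _ hkj, hflip_eq]
          revert hkd
          cases S u k <;> cases S v k <;> simp
        have hwoff : ∀ i, i ≠ j → i ≠ k → S w i = S u i := by
          intro i hij hik
          rw [hw, hflip_ne _ _ _ hij, hflip_ne _ _ _ hik]
        have hfe : Finset.univ.filter (fun i => i ≠ j ∧ S w i ≠ S v i)
            = (Finset.univ.filter (fun i => i ≠ j ∧ S u i ≠ S v i)).erase k := by
          ext i
          simp only [Finset.mem_erase, Finset.mem_filter, Finset.mem_univ, true_and]
          constructor
          · rintro ⟨hij, hdw⟩
            by_cases hik : i = k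
            · subst hik; exact absurd hwk hdw
            · exact ⟨hik, hij, by rw [← hwoff i hij hik]; exact hdw⟩
          · rintro ⟨hik, hij, hdu⟩
            exact ⟨hij, by rw [hwoff i hij hik]; exact hdu⟩
        have hcard2 : (Finset.univ.filter (fun i => i ≠ j ∧ S w i ≠ S v i)).card = m - 1 := by
          rw [hfe, Finset.card_erase_of_mem hkmem, hm]
        exact hcuw.trans (ih (m - 1) (Nat.sub_lt hpos Nat.one_pos) w v hcard2)
  refine ⟨fun v => S v j, hcardT, hcardF, fun u v => ⟨fun h => hadjS j u v h,
    fun h => (hcs j u v).2 ⟨hconst u v, h⟩⟩⟩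
end

section
/- Let d ≥ 2 and let G_1,…,G_d be simple graphs on the vertex set {1,…,r}, each a disjoint union of complete bipartite graphs, such that every pair of distinct vertices is adjacent in at least two of the graphs G_1,…,G_d. Let c_d be the number of connected components of G_d (isolated vertices count as components). Then c_d + r ≤ 2^{d−1} + 1, and moreover if c_d + r = 2^{d−1} + 1 then r = 2^{d−1}. -/
open Function

private lemma card_cc_le {V : Type} [Finite V] (G : SimpleGraph V) :
    Nat.card G.ConnectedComponent ≤ Nat.card V :=
  Nat.card_le_card_of_surjective G.connectedComponentMk (fun c => c.exists_rep)

private lemma card_split {V : Type} [Finite V] (p : V → Prop) :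
    Nat.card {v : V // p v} + Nat.card {v : V // ¬ p v} = Nat.card V := by
  classical
  rw [← Nat.card_sum]
  exact Nat.card_congr (Equiv.sumCompl p)

private lemma card_succ_le_of_surj {α β : Type} [Finite α] (f : α → β)
    (hs : Surjective f) {x y : α} (hxy : x ≠ y) (hf : f x = f y) :
    Nat.card β + 1 ≤ Nat.card α := by
  have : Finite β := Finite.of_surjective f hs
  have hg : Surjective (fun a : {a : α // ¬ a = x} => f a.1) := by
    intro b
    obtain ⟨a, ha⟩ := hs b
    by_cases h : a = x
    · exact ⟨⟨y, fun h' => hxy h'.symm⟩, by rw [← ha, h, hf]⟩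
    · exact ⟨⟨a, h⟩, ha⟩
  have h1 : Nat.card β ≤ Nat.card {a : α // ¬ a = x} :=
    Nat.card_le_card_of_surjective _ hg
  have hu : Unique {a : α // a = x} := ⟨⟨⟨x, rfl⟩⟩, fun a => Subtype.ext a.2⟩
  have h2 : Nat.card {a : α // a = x} = 1 := Nat.card_unique
  have h3 := card_split (fun a : α => a = x)
  omega

/-- The key hypercube lemma: if `f : V → {0,1}^n` is injective and `G` contains
all pairs whose images differ in at most one coordinate, then
(#components of G) + |V| ≤ 2^n + 1, with ≤ 2^n when `f` is not surjective. -/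
private lemma cube_main : ∀ (n : ℕ) (V : Type) [Finite V] (f : V → (Fin n → Bool)),
    Injective f → ∀ (G : SimpleGraph V),
    (∀ u v : V, u ≠ v → (∀ j k : Fin n, f u j ≠ f v j → f u k ≠ f v k → j = k) → G.Adj u v) →
    Nat.card G.ConnectedComponent + Nat.card V ≤ 2 ^ n + 1 ∧
      (¬ Surjective f → Nat.card G.ConnectedComponent + Nat.card V ≤ 2 ^ n) := by
  intro n
  induction n with
  | zero =>
    intro V _ f hf G _
    have hsub : Subsingleton V := ⟨fun a b => hf (Subsingleton.elim _ _)⟩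
    have hV : Nat.card V ≤ 1 := by
      have h1 := Nat.card_le_card_of_injective f hf
      have h2 : Nat.card (Fin 0 → Bool) = 1 := by simp [Nat.card_eq_fintype_card]
      omega
    have hc := card_cc_le G
    refine ⟨by omega, fun hns => ?_⟩
    have hVe : IsEmpty V := by
      by_contra h
      rw [not_isEmpty_iff] at h
      obtain ⟨v⟩ := h
      exact hns fun w => ⟨v, Subsingleton.elim _ _⟩
    have h0 : Nat.card V = 0 := Nat.card_of_isEmpty
    omega
  | succ n ih =>
    intro V _ f hf G hG
    classical
    set A : Set V := {v : V | f v 0 = false} with hA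
    set B : Set V := {v : V | ¬ (f v 0 = false)} with hB
    have hAmem : ∀ v : ↥A, f v.1 0 = false := fun v => v.2
    have hBmem : ∀ v : ↥B, f v.1 0 = true := fun v => Bool.eq_true_of_not_eq_false v.2
    -- head + tail determine the vector
    have hext : ∀ u v : V, f u 0 = f v 0 → Fin.tail (f u) = Fin.tail (f v) → u = v := by
      intro u v h0 ht
      apply hf; funext j
      refine Fin.cases h0 (fun i => congrFun ht i) j
    -- equal heads: the "at most one differing coordinate" condition transfers
    have htails : ∀ u v : V, f u 0 = f v 0 →
        (∀ j k : Fin n, Fin.tail (f u) j ≠ Fin.tail (f v) j →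
          Fin.tail (f u) k ≠ Fin.tail (f v) k → j = k) →
        (∀ j k : Fin (n+1), f u j ≠ f v j → f u k ≠ f v k → j = k) := by
      intro u v h0 h j k hj hk
      rcases Fin.eq_zero_or_eq_succ j with rfl | ⟨j', rfl⟩
      · exact absurd h0 hj
      rcases Fin.eq_zero_or_eq_succ k with rfl | ⟨k', rfl⟩
      · exact absurd h0.symm (Ne.symm hk)
      exact congrArg Fin.succ (h j' k' hj hk)
    -- equal tails, different heads: adjacency in G (a cross edge)
    have hcross : ∀ u v : V, f u 0 ≠ f v 0 → Fin.tail (f u) = Fin.tail (f v) →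
        G.Adj u v := by
      intro u v h0 ht
      apply hG u v (fun h' => h0 (h' ▸ rfl))
      intro j k hj hk
      obtain rfl : j = 0 := by
        rcases Fin.eq_zero_or_eq_succ j with h | ⟨j', rfl⟩
        · exact h
        · exact absurd (congrFun ht j') hj
      rcases Fin.eq_zero_or_eq_succ k with h | ⟨k', rfl⟩
      · exact h.symm
      · exact absurd (congrFun ht k') hk
    set fA : ↥A → (Fin n → Bool) := fun v => Fin.tail (f v.1) with hfA
    set fB : ↥B → (Fin n → Bool) := fun v => Fin.tail (f v.1) with hfB
    have hheads : ∀ (u : ↥A) (v : ↥B), f u.1 0 ≠ f v.1 0 := by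
      intro u v
      rw [hAmem u, hBmem v]
      simp
    have hfAinj : Injective fA := fun u v h =>
      Subtype.ext (hext u.1 v.1 (by rw [hAmem u, hAmem v]) h)
    have hfBinj : Injective fB := fun u v h =>
      Subtype.ext (hext u.1 v.1 (by rw [hBmem u, hBmem v]) h)
    have hGA : ∀ u v : ↥A, u ≠ v →
        (∀ j k : Fin n, fA u j ≠ fA v j → fA u k ≠ fA v k → j = k) →
        (G.induce A).Adj u v := by
      intro u v huv h
      exact hG u.1 v.1 (fun h' => huv (Subtype.ext h'))
        (htails u.1 v.1 (by rw [hAmem u, hAmem v]) h)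
    have hGB : ∀ u v : ↥B, u ≠ v →
        (∀ j k : Fin n, fB u j ≠ fB v j → fB u k ≠ fB v k → j = k) →
        (G.induce B).Adj u v := by
      intro u v huv h
      exact hG u.1 v.1 (fun h' => huv (Subtype.ext h'))
        (htails u.1 v.1 (by rw [hBmem u, hBmem v]) h)
    obtain ⟨ihA1, ihA2⟩ := ih ↥A fA hfAinj (G.induce A) hGA
    obtain ⟨ihB1, ihB2⟩ := ih ↥B fB hfBinj (G.induce B) hGB
    -- the surjection from components of the two induced graphs
    set φA : G.induce A →g G := ⟨Subtype.val, fun h => h⟩ with hφA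
    set φB : G.induce B →g G := ⟨Subtype.val, fun h => h⟩ with hφB
    set F : (G.induce A).ConnectedComponent ⊕ (G.induce B).ConnectedComponent →
        G.ConnectedComponent :=
      Sum.elim (SimpleGraph.ConnectedComponent.map φA)
        (SimpleGraph.ConnectedComponent.map φB) with hF
    have hFsurj : Surjective F := by
      intro c
      obtain ⟨v, rfl⟩ := c.exists_rep
      by_cases hv : f v 0 = false
      · exact ⟨Sum.inl ((G.induce A).connectedComponentMk ⟨v, hv⟩),
          SimpleGraph.ConnectedComponent.map_mk _ _⟩
      · exact ⟨Sum.inr ((G.induce B).connectedComponentMk ⟨v, hv⟩),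
          SimpleGraph.ConnectedComponent.map_mk _ _⟩
    have hcards : Nat.card ↥A + Nat.card ↥B = Nat.card V := card_split _
    have hccA := card_cc_le (G.induce A)
    have hccB := card_cc_le (G.induce B)
    have hFle : Nat.card G.ConnectedComponent ≤
        Nat.card (G.induce A).ConnectedComponent +
        Nat.card (G.induce B).ConnectedComponent := by
      have := Nat.card_le_card_of_surjective F hFsurj
      rwa [Nat.card_sum] at this
    by_cases hcr : ∃ (a : ↥A) (b : ↥B), G.Adj a.1 b.1
    · -- cross edge: F is not injective
      obtain ⟨a, b, hab⟩ := hcr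
      have hne : (Sum.inl ((G.induce A).connectedComponentMk a) :
          (G.induce A).ConnectedComponent ⊕ (G.induce B).ConnectedComponent) ≠
          Sum.inr ((G.induce B).connectedComponentMk b) := Sum.inl_ne_inr
      have heq : F (Sum.inl ((G.induce A).connectedComponentMk a)) =
          F (Sum.inr ((G.induce B).connectedComponentMk b)) := by
        show SimpleGraph.ConnectedComponent.map φA _ =
          SimpleGraph.ConnectedComponent.map φB _
        rw [SimpleGraph.ConnectedComponent.map_mk, SimpleGraph.ConnectedComponent.map_mk]
        exact SimpleGraph.ConnectedComponent.sound hab.reachable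
      have hkey : Nat.card G.ConnectedComponent + 1 ≤
          Nat.card (G.induce A).ConnectedComponent +
          Nat.card (G.induce B).ConnectedComponent := by
        have := card_succ_le_of_surj F hFsurj hne heq
        rwa [Nat.card_sum] at this
      refine ⟨by omega, fun hns => ?_⟩
      -- f not surjective: one slice's tail map is not surjective
      unfold Surjective at hns
      push_neg at hns
      obtain ⟨w, hw⟩ := hns
      rcases Bool.eq_false_or_eq_true (w 0) with hw0 | hw0
      · have hnsB : ¬ Surjective fB := by
          intro hsB
          obtain ⟨b, hb⟩ := hsB (Fin.tail w)
          exact hw b.1 (funext fun j =>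
            Fin.cases ((hBmem b).trans hw0.symm) (fun i => congrFun hb i) j)
        have := ihB2 hnsB
        omega
      · have hnsA : ¬ Surjective fA := by
          intro hsA
          obtain ⟨a, ha⟩ := hsA (Fin.tail w)
          exact hw a.1 (funext fun j =>
            Fin.cases ((hAmem a).trans hw0.symm) (fun i => congrFun ha i) j)
        have := ihA2 hnsA
        omega
    · -- no cross edge: the tail images are disjoint, so |V| ≤ 2^n
      push_neg at hcr
      have hdisj : Injective (Sum.elim fA fB) := by
        intro x y hxy
        match x, y with
        | Sum.inl a, Sum.inl a' => exact congrArg Sum.inl (hfAinj hxy)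
        | Sum.inr b, Sum.inr b' => exact congrArg Sum.inr (hfBinj hxy)
        | Sum.inl a, Sum.inr b =>
          exact absurd (hcross a.1 b.1 (hheads a b) hxy) (hcr a b)
        | Sum.inr b, Sum.inl a =>
          exact absurd (hcross a.1 b.1 (hheads a b) hxy.symm) (hcr a b)
      have hVle : Nat.card V ≤ 2 ^ n := by
        have h1 := Nat.card_le_card_of_injective _ hdisj
        rw [Nat.card_sum] at h1
        have h2 : Nat.card (Fin n → Bool) = 2 ^ n := by
          simp [Nat.card_eq_fintype_card]
        omega
      have hcc : Nat.card G.ConnectedComponent ≤ Nat.card V := card_cc_le G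
      have h2n : 2 ^ n + 2 ^ n = 2 ^ (n+1) := by ring
      exact ⟨by omega, fun _ => by omega⟩

/-- Let `G₁,…,G_d` be simple graphs on `r` vertices, each a disjoint union of
complete bipartite graphs, such that every pair of distinct vertices is adjacent
in at least two of the graphs. If `c_d` is the number of connected components of
`G_d`, then `c_d + r ≤ 2^{d−1} + 1`, with equality only if `r = 2^{d−1}`. -/
theorem stmt18 (d r : ℕ) (hd : 2 ≤ d)
    (G : Fin d → SimpleGraph (Fin r))
    (hbip : ∀ j, ∃ (C : Type) (c : Fin r → C) (s : Fin r → Bool),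
      ∀ u v, (G j).Adj u v ↔ (c u = c v ∧ s u ≠ s v))
    (h2 : ∀ u v : Fin r, u ≠ v →
      ∃ j₁ j₂ : Fin d, j₁ ≠ j₂ ∧ (G j₁).Adj u v ∧ (G j₂).Adj u v)
    (cd : ℕ)
    (hcd : cd = Nat.card (G ⟨d - 1, by omega⟩).ConnectedComponent) :
    cd + r ≤ 2 ^ (d - 1) + 1 ∧ (cd + r = 2 ^ (d - 1) + 1 → r = 2 ^ (d - 1)) := by
  classical
  choose C c s hs using hbip
  set n : ℕ := d - 1 with hn
  set f : Fin r → (Fin n → Bool) := fun u i => s (Fin.castLE (by omega) i) u with hf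
  -- adjacency in G j for j.val < d-1 means the j-th coordinate differs
  have hcoord : ∀ (j : Fin d) (u v : Fin r) (hj : j.val < n), (G j).Adj u v →
      f u ⟨j.val, hj⟩ ≠ f v ⟨j.val, hj⟩ := by
    intro j u v hj hadj
    have hdiff := ((hs j u v).mp hadj).2
    have hcast : Fin.castLE (by omega : n ≤ d) ⟨j.val, hj⟩ = j := by
      apply Fin.ext; rfl
    simpa [hf, hcast] using hdiff
  have hfinj : Injective f := by
    intro u v huv
    by_contra hne
    obtain ⟨j₁, j₂, hj, ha1, ha2⟩ := h2 u v hne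
    have hval : ∀ j : Fin d, (G j).Adj u v → j.val = d - 1 := by
      intro j hadj
      by_contra h
      have hjlt : j.val < n := by have := j.isLt; omega
      exact hcoord j u v hjlt hadj (by rw [huv])
    exact hj (Fin.ext ((hval j₁ ha1).trans (hval j₂ ha2).symm))
  have hG : ∀ u v : Fin r, u ≠ v →
      (∀ j k : Fin n, f u j ≠ f v j → f u k ≠ f v k → j = k) →
      (G ⟨d - 1, by omega⟩).Adj u v := by
    intro u v huv h
    obtain ⟨j₁, j₂, hj, ha1, ha2⟩ := h2 u v huv
    have key : j₁.val = d - 1 ∨ j₂.val = d - 1 := by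
      by_contra hcon
      push_neg at hcon
      have h1 : j₁.val < n := by have := j₁.isLt; omega
      have h2' : j₂.val < n := by have := j₂.isLt; omega
      have d1 := hcoord j₁ u v h1 ha1
      have d2 := hcoord j₂ u v h2' ha2
      have hvv : (⟨j₁.val, h1⟩ : Fin n) = ⟨j₂.val, h2'⟩ := h _ _ d1 d2
      have hv2 : j₁.val = j₂.val := by
        have := congrArg Fin.val hvv
        simpa using this
      exact hj (Fin.ext hv2)
    rcases key with hk | hk
    · have : j₁ = ⟨d - 1, by omega⟩ := Fin.ext hk
      exact this ▸ ha1
    · have : j₂ = ⟨d - 1, by omega⟩ := Fin.ext hk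
      exact this ▸ ha2
  obtain ⟨main1, main2⟩ := cube_main n (Fin r) f hfinj (G ⟨d - 1, by omega⟩) hG
  have hcardr : Nat.card (Fin r) = r := by simp
  rw [hcardr, ← hcd] at main1 main2
  refine ⟨main1, fun heq => ?_⟩
  by_contra hne
  have hns : ¬ Surjective f := by
    intro hsurj
    have h1 : Nat.card (Fin r) = Nat.card (Fin n → Bool) :=
      Nat.card_eq_of_bijective f ⟨hfinj, hsurj⟩
    rw [hcardr] at h1
    have h2' : Nat.card (Fin n → Bool) = 2 ^ n := by
      simp [Nat.card_eq_fintype_card]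
    exact hne (h1.trans h2')
  have := main2 hns
  omega
end

section
/- Let T = Σ_{i=1}^r x^{(i)} be a two-orthogonal decomposition in ℝ^{n_1} ⊗ ⋯ ⊗ ℝ^{n_d}. Then for each i there exist unit vectors u_k ∈ ℝ^{n_k} (⟨u_k,u_k⟩ = 1 for all k) and a real number λ with |λ| = ‖x^{(i)}‖ such that x^{(i)} = λ u_1 ⊗ ⋯ ⊗ u_d and u_1 ⊗ ⋯ ⊗ u_d is a singular vector tuple of T with singular value λ. -/
/-- The contraction of `T` against the vectors `x_l`, `l ≠ k`, in all factors but
the `k`-th: its `m`-th entry is `Σ_{i : i_k = m} T(i) ∏_{l ≠ k} x_l(i_l)`. -/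
def contr {d : ℕ} {n : Fin d → ℕ} (T : ((k : Fin d) → Fin (n k)) → ℝ)
    (x : (k : Fin d) → Fin (n k) → ℝ) (k : Fin d) (m : Fin (n k)) : ℝ :=
  ∑ i ∈ Finset.univ.filter (fun i : (k' : Fin d) → Fin (n k') => i k = m),
    T i * ∏ l ∈ Finset.univ.erase k, x l (i l)

lemma sum_prod_pi {d : ℕ} {n : Fin d → ℕ} (f : (k : Fin d) → Fin (n k) → ℝ) :
    ∑ i : ((k : Fin d) → Fin (n k)), ∏ k, f k (i k) = ∏ k, ∑ j, f k j := by
  rw [Finset.prod_univ_sum, Fintype.piFinset_univ]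

lemma fdot_self_pos {ι : Type*} [Fintype ι] {v : ι → ℝ} (hv : v ≠ 0) :
    0 < fdot v v := by
  have h1 : 0 ≤ fdot v v := Finset.sum_nonneg fun a _ => mul_self_nonneg _
  rcases h1.lt_or_eq with h | h
  · exact h
  · exfalso; apply hv; funext a
    have := (Finset.sum_eq_zero_iff_of_nonneg
      (fun a _ => mul_self_nonneg (v a))).mp h.symm a (Finset.mem_univ a)
    exact mul_self_eq_zero.mp this

lemma fdot_smul_right {ι : Type*} [Fintype ι] (v w : ι → ℝ) (a : ℝ) :
    fdot v (fun j => a * w j) = a * fdot v w := by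
  unfold fdot
  rw [Finset.mul_sum]
  congr 1; funext j; ring

lemma fdot_tensProd_self {d : ℕ} {n : Fin d → ℕ} (v : (k : Fin d) → Fin (n k) → ℝ) :
    fdot (tensProd v) (tensProd v) = ∏ k, fdot (v k) (v k) := by
  unfold fdot tensProd
  rw [← sum_prod_pi (fun k j => v k j * v k j)]
  congr 1; funext i
  rw [← Finset.prod_mul_distrib]

set_option maxHeartbeats 1000000 in
lemma contr_tensProd {d : ℕ} {n : Fin d → ℕ} (v w : (k : Fin d) → Fin (n k) → ℝ)
    (k : Fin d) (m : Fin (n k)) :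
    contr (tensProd v) w k m
      = v k m * ∏ l ∈ Finset.univ.erase k, fdot (v l) (w l) := by
  set f : (l : Fin d) → Fin (n l) → ℝ :=
    fun l j => if l = k then (if (j : ℕ) = (m : ℕ) then v l j else 0)
      else v l j * w l j with hf
  have key : ∀ i : (k' : Fin d) → Fin (n k'),
      (if i k = m then tensProd v i * ∏ l ∈ Finset.univ.erase k, w l (i l) else 0)
        = ∏ l, f l (i l) := by
    intro i
    rw [← Finset.mul_prod_erase Finset.univ (fun l => f l (i l)) (Finset.mem_univ k)]
    have hfk : f k (i k) = if (i k : ℕ) = (m : ℕ) then v k (i k) else 0 := by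
      simp [hf]
    have herase : ∏ l ∈ Finset.univ.erase k, f l (i l)
        = ∏ l ∈ Finset.univ.erase k, v l (i l) * w l (i l) := by
      apply Finset.prod_congr rfl
      intro l hl
      have : l ≠ k := (Finset.mem_erase.mp hl).1
      simp [hf, this]
    rw [hfk, herase]
    by_cases hik : i k = m
    · have : (i k : ℕ) = (m : ℕ) := by rw [hik]
      rw [if_pos hik, if_pos this]
      unfold tensProd
      rw [← Finset.mul_prod_erase Finset.univ (fun l => v l (i l)) (Finset.mem_univ k)]
      rw [Finset.prod_mul_distrib]
      ring
    · have : ¬ ((i k : ℕ) = (m : ℕ)) := fun h => hik (Fin.ext h)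
      rw [if_neg hik, if_neg this, zero_mul]
  have h2 : (∑ i : (k' : Fin d) → Fin (n k'),
      if i k = m then tensProd v i * ∏ l ∈ Finset.univ.erase k, w l (i l) else 0)
      = ∏ l, ∑ j, f l j := by
    rw [show (∑ i : (k' : Fin d) → Fin (n k'),
        if i k = m then tensProd v i * ∏ l ∈ Finset.univ.erase k, w l (i l) else 0)
        = ∑ i : (k' : Fin d) → Fin (n k'), ∏ l, f l (i l) from
      Finset.sum_congr rfl (fun i _ => key i)]
    exact sum_prod_pi f
  unfold contr
  rw [Finset.sum_filter, h2,
    ← Finset.mul_prod_erase Finset.univ (fun l => ∑ j, f l j) (Finset.mem_univ k)]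
  congr 1
  · have h1 : ∀ j : Fin (n k), f k j = if j = m then v k j else 0 := by
      intro j
      show (if k = k then (if (j : ℕ) = (m : ℕ) then v k j else 0)
        else v k j * w k j) = _
      rw [if_pos rfl]
      by_cases hj : j = m
      · rw [if_pos (by rw [hj]), if_pos hj]
      · rw [if_neg (fun h => hj (Fin.ext h)), if_neg hj]
    rw [Finset.sum_congr rfl (fun j _ => h1 j),
      Finset.sum_ite_eq' Finset.univ m (v k)]
    simp
  · apply Finset.prod_congr rfl
    intro l hl
    have hlk : l ≠ k := (Finset.mem_erase.mp hl).1
    unfold fdot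
    apply Finset.sum_congr rfl
    intro j _
    simp [hf, hlk]

lemma contr_sum {d : ℕ} {n : Fin d → ℕ} {r : ℕ}
    (Ts : Fin r → ((k : Fin d) → Fin (n k)) → ℝ)
    (w : (k : Fin d) → Fin (n k) → ℝ) (k : Fin d) (m : Fin (n k)) :
    contr (∑ j, Ts j) w k m = ∑ j, contr (Ts j) w k m := by
  unfold contr
  rw [Finset.sum_comm]
  apply Finset.sum_congr rfl
  intro i _
  rw [Finset.sum_apply, Finset.sum_mul]

/-- Each summand `x⁽ⁱ⁾` of a two-orthogonal decomposition of `T`, after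
normalizing its factors, is a singular vector tuple of `T` whose singular value
is `±‖x⁽ⁱ⁾‖`. -/
theorem stmt19 (d : ℕ) (hd : 2 ≤ d) (n : Fin d → ℕ) (hn : ∀ k, 2 ≤ n k)
    (r : ℕ) (x : Fin r → (k : Fin d) → Fin (n k) → ℝ)
    (hx : ∀ i, tensProd (x i) ≠ 0)
    (horth : ∀ i j : Fin r, i ≠ j → ∃ k₁ k₂ : Fin d, k₁ ≠ k₂ ∧
      fdot (x i k₁) (x j k₁) = 0 ∧ fdot (x i k₂) (x j k₂) = 0)
    (T : ((k : Fin d) → Fin (n k)) → ℝ)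
    (hT : T = ∑ i, tensProd (x i)) :
    ∀ i : Fin r, ∃ (u : (k : Fin d) → Fin (n k) → ℝ) (lam : ℝ),
      (∀ k, fdot (u k) (u k) = 1) ∧
      |lam| = Real.sqrt (fdot (tensProd (x i)) (tensProd (x i))) ∧
      tensProd (x i) = lam • tensProd u ∧
      (∀ (k : Fin d) (m : Fin (n k)), contr T u k m = lam * u k m) := by
  intro i
  -- each factor is nonzero
  have hxk : ∀ k, x i k ≠ 0 := by
    intro k hk
    apply hx i
    funext i'
    unfold tensProd
    exact Finset.prod_eq_zero (Finset.mem_univ k) (by rw [hk]; rfl)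
  have hpos : ∀ k, 0 < fdot (x i k) (x i k) := fun k => fdot_self_pos (hxk k)
  set c : Fin d → ℝ := fun k => Real.sqrt (fdot (x i k) (x i k)) with hc
  have hcpos : ∀ k, 0 < c k := fun k => Real.sqrt_pos.mpr (hpos k)
  have hcsq : ∀ k, c k * c k = fdot (x i k) (x i k) := fun k =>
    Real.mul_self_sqrt (hpos k).le
  set u : (k : Fin d) → Fin (n k) → ℝ := fun k j => (c k)⁻¹ * x i k j with hu
  set lam : ℝ := ∏ k, c k with hlam
  have hlampos : 0 < lam := Finset.prod_pos fun k _ => hcpos k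
  refine ⟨u, lam, ?_, ?_, ?_, ?_⟩
  · -- unit vectors
    intro k
    have : fdot (u k) (u k) = (c k)⁻¹ * ((c k)⁻¹ * fdot (x i k) (x i k)) := by
      rw [hu]
      rw [← fdot_smul_right (x i k) (x i k) (c k)⁻¹]
      unfold fdot
      rw [Finset.mul_sum]
      congr 1; funext j; ring
    rw [this, ← hcsq k]
    field_simp
    exact div_self (hcpos k).ne'
  · -- |lam| = sqrt ...
    rw [abs_of_pos hlampos, fdot_tensProd_self]
    have : ∏ k, fdot (x i k) (x i k) = lam * lam := by
      rw [hlam, ← Finset.prod_mul_distrib]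
      exact (Finset.prod_congr rfl fun k _ => (hcsq k).symm)
    rw [this]
    exact (Real.sqrt_mul_self hlampos.le).symm
  · -- scaling
    funext i'
    have : tensProd u i' = (∏ k, (c k)⁻¹) * tensProd (x i) i' := by
      unfold tensProd
      rw [← Finset.prod_mul_distrib]
    show tensProd (x i) i' = lam * tensProd u i'
    rw [this, hlam, ← mul_assoc, ← Finset.prod_mul_distrib]
    have : ∏ k, c k * (c k)⁻¹ = 1 :=
      Finset.prod_eq_one fun k _ => mul_inv_cancel₀ (hcpos k).ne'
    rw [this, one_mul]
  · -- singular vector equations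
    intro k m
    have hfdu : ∀ (j : Fin r) (l : Fin d),
        fdot (x j l) (u l) = (c l)⁻¹ * fdot (x j l) (x i l) := fun j l =>
      fdot_smul_right (x j l) (x i l) (c l)⁻¹
    rw [hT, contr_sum]
    rw [Finset.sum_eq_single i]
    · rw [contr_tensProd]
      have herase : ∏ l ∈ Finset.univ.erase k, fdot (x i l) (u l)
          = ∏ l ∈ Finset.univ.erase k, c l := by
        apply Finset.prod_congr rfl
        intro l _
        rw [hfdu i l, ← hcsq l]
        field_simp
      rw [herase]
      have : lam = c k * ∏ l ∈ Finset.univ.erase k, c l :=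
        (Finset.mul_prod_erase Finset.univ c (Finset.mem_univ k)).symm
      rw [this]
      have huk : u k m = (c k)⁻¹ * x i k m := rfl
      rw [huk, show c k * (∏ l ∈ Finset.univ.erase k, c l) * ((c k)⁻¹ * x i k m)
          = (c k * (c k)⁻¹) * ((∏ l ∈ Finset.univ.erase k, c l) * x i k m) by ring,
        mul_inv_cancel₀ (hcpos k).ne', one_mul, mul_comm]
    · intro j _ hji
      rw [contr_tensProd]
      obtain ⟨k₁, k₂, hk12, h1, h2⟩ := horth j i hji
      have hzero : ∃ l ∈ Finset.univ.erase k, fdot (x j l) (x i l) = 0 := by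
        by_cases hk1 : k₁ = k
        · exact ⟨k₂, Finset.mem_erase.mpr ⟨fun h => hk12 (hk1.trans h.symm), Finset.mem_univ _⟩, h2⟩
        · exact ⟨k₁, Finset.mem_erase.mpr ⟨hk1, Finset.mem_univ _⟩, h1⟩
      obtain ⟨l, hl, hl0⟩ := hzero
      have : fdot (x j l) (u l) = 0 := by rw [hfdu j l, hl0, mul_zero]
      rw [Finset.prod_eq_zero hl this, mul_zero]
    · intro h; exact absurd (Finset.mem_univ i) h
end
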